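/- arXiv:2410.17611 — 4 statements merged into one kernel-verified Lean document; each statement's English description precedes it below -/
import Mathlib

section
/- For r ≥ 2, the number of maximum total mutual-visibility sets of GT(r) equals 2^{2^{r−1}}; more precisely, the μ_t-sets are exactly the sets consisting of exactly one quasi-leaf from each of the 2^{r−1} pairs of twin quasi-leaves. -/
open SimpleGraph

/-- Two vertices `u` and `v` are `S`-visible: there exists a shortest `u,v`-path
whose intersection with `S` is contained in `{u, v}`. -/
def isVisible {V : Type*} (G : SimpleGraph V) (S : Set V) (u v : V) : Prop :=
  ∃ p : G.Walk u v, p.IsPath ∧ p.length = G.dist u v ∧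
    ∀ w ∈ p.support, w ∈ S → w = u ∨ w = v

/-- Two vertices `u` and `v` are `S`-positionable: every shortest `u,v`-path
has its intersection with `S` contained in `{u, v}`. -/
def isPositionable {V : Type*} (G : SimpleGraph V) (S : Set V) (u v : V) : Prop :=
  ∀ p : G.Walk u v, p.IsPath → p.length = G.dist u v →
    ∀ w ∈ p.support, w ∈ S → w = u ∨ w = v

def isMVSet {V : Type*} (G : SimpleGraph V) (S : Set V) : Prop :=
  ∀ u ∈ S, ∀ v ∈ S, isVisible G S u v

def isOuterMVSet {V : Type*} (G : SimpleGraph V) (S : Set V) : Prop :=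
  isMVSet G S ∧ ∀ u ∈ S, ∀ v ∉ S, isVisible G S u v

def isDualMVSet {V : Type*} (G : SimpleGraph V) (S : Set V) : Prop :=
  isMVSet G S ∧ ∀ u ∉ S, ∀ v ∉ S, isVisible G S u v

def isTotalMVSet {V : Type*} (G : SimpleGraph V) (S : Set V) : Prop :=
  ∀ u v : V, isVisible G S u v

def isGPSet {V : Type*} (G : SimpleGraph V) (S : Set V) : Prop :=
  ∀ u ∈ S, ∀ v ∈ S, isPositionable G S u v

def isOuterGPSet {V : Type*} (G : SimpleGraph V) (S : Set V) : Prop :=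
  isGPSet G S ∧ ∀ u ∈ S, ∀ v ∉ S, isPositionable G S u v

def isDualGPSet {V : Type*} (G : SimpleGraph V) (S : Set V) : Prop :=
  isGPSet G S ∧ ∀ u ∉ S, ∀ v ∉ S, isPositionable G S u v

def isTotalGPSet {V : Type*} (G : SimpleGraph V) (S : Set V) : Prop :=
  ∀ u v : V, isPositionable G S u v

/-- Vertices of the generalized glued `t`-ary tree obtained from `n` copies of
the perfect `t`-ary tree of depth `r`: an internal vertex of copy `i` is encoded
as the list of child-choices from the root (length `< r`), and a quasi-leaf
(identified leaf) is encoded as such a list of length exactly `r`. -/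
abbrev gluedVert (r n t : ℕ) : Type :=
  (Fin n × {l : List (Fin t) // l.length < r}) ⊕ {l : List (Fin t) // l.length = r}

def gluedAdj (r n t : ℕ) : gluedVert r n t → gluedVert r n t → Prop
  | Sum.inl (i, s), Sum.inl (j, s') => i = j ∧ ∃ b, s'.val = s.val ++ [b]
  | Sum.inl (_, s), Sum.inr l => ∃ b, l.val = s.val ++ [b]
  | Sum.inr _, _ => False

/-- The generalized glued `t`-ary tree on `n` copies of the perfect `t`-ary tree
of depth `r`.  `gluedTree r 2 2` is the glued binary tree `GT(r)`,
`gluedTree r 2 t` is the glued `t`-ary tree `GT(r,t)`, and `gluedTree r n 2`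
is the generalized glued binary tree `GT_r^(n)`. -/
def gluedTree (r n t : ℕ) : SimpleGraph (gluedVert r n t) :=
  SimpleGraph.fromRel (gluedAdj r n t)

/-- The set of quasi-leaves. -/
def quasiLeaves (r n t : ℕ) : Set (gluedVert r n t) := {x | ∃ l, x = Sum.inr l}

/-- The vertex set of the `i`-th copy `T_r^(i)` of the perfect `t`-ary tree
(its internal vertices together with all quasi-leaves). -/
def copySet (r n t : ℕ) (i : Fin n) : Set (gluedVert r n t) :=
  {x | (∃ s, x = Sum.inl (i, s)) ∨ x ∈ quasiLeaves r n t}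

namespace GTaux

variable {r : ℕ}

abbrev Leaf (r : ℕ) := {l : List (Fin 2) // l.length = r}
abbrev Node (r : ℕ) := {l : List (Fin 2) // l.length < r}

lemma leaf_ne_nil (hr : 1 ≤ r) (l : Leaf r) : l.val ≠ [] := by
  have := l.prop
  intro h
  rw [h] at this
  simp at this
  omega

def dl (hr : 1 ≤ r) (l : Leaf r) : Node r :=
  ⟨l.val.dropLast, by rw [List.length_dropLast, l.prop]; omega⟩

lemma dl_append_getLast (hr : 1 ≤ r) (l : Leaf r) :
    (dl hr l).val ++ [l.val.getLast (leaf_ne_nil hr l)] = l.val :=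
  List.dropLast_append_getLast _

def tw (hr : 1 ≤ r) (l : Leaf r) : Leaf r :=
  ⟨l.val.dropLast ++ [1 - l.val.getLast (leaf_ne_nil hr l)], by
    rw [List.length_append, List.length_dropLast, l.prop]; simp; omega⟩

lemma dl_tw (hr : 1 ≤ r) (l : Leaf r) : dl hr (tw hr l) = dl hr l :=
  Subtype.ext (by simp [tw, dl])

lemma getLast_tw (hr : 1 ≤ r) (l : Leaf r) :
    (tw hr l).val.getLast (leaf_ne_nil hr _) = 1 - l.val.getLast (leaf_ne_nil hr l) := by
  simp [tw]

lemma fin2_cases (b : Fin 2) : b = 0 ∨ b = 1 := by revert b; decide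

lemma fin2_sub_ne (b : Fin 2) : 1 - b ≠ b := by revert b; decide

lemma fin2_ne_iff (a b : Fin 2) : a ≠ b ↔ a = 1 - b := by revert a b; decide

lemma tw_ne (hr : 1 ≤ r) (l : Leaf r) : tw hr l ≠ l := by
  intro h
  have h1 : (tw hr l).val.getLast (leaf_ne_nil hr _) = l.val.getLast (leaf_ne_nil hr l) := by
    congr 1 <;> rw [h]
  rw [getLast_tw] at h1
  exact fin2_sub_ne _ h1

lemma tw_of_ne (hr : 1 ≤ r) (l m : Leaf r) (hd : dl hr l = dl hr m) (hne : l ≠ m) :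
    m = tw hr l := by
  apply Subtype.ext
  have hl := dl_append_getLast hr l
  have hm := dl_append_getLast hr m
  have hgl : m.val.getLast (leaf_ne_nil hr m) ≠ l.val.getLast (leaf_ne_nil hr l) := by
    intro h
    apply hne
    apply Subtype.ext
    rw [← hl, ← hm, hd, h]
  rw [fin2_ne_iff] at hgl
  show m.val = (dl hr l).val ++ _
  rw [← hm, hd, hgl]


lemma ne_of_append {α : Type*} {s t : List α} {b : α} (h : t = s ++ [b]) : s ≠ t := by
  intro h'; rw [h'] at h; have := congrArg List.length h; simp at this

lemma adj_inl_inl (i j : Fin 2) (s t : Node r) :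
    (gluedTree r 2 2).Adj (.inl (i, s)) (.inl (j, t)) ↔
      i = j ∧ ((∃ b, t.val = s.val ++ [b]) ∨ (∃ b, s.val = t.val ++ [b])) := by
  rw [gluedTree, SimpleGraph.fromRel_adj]
  constructor
  · rintro ⟨-, h | h⟩
    · exact ⟨h.1, Or.inl h.2⟩
    · exact ⟨h.1.symm, Or.inr h.2⟩
  · rintro ⟨rfl, h | h⟩
    · obtain ⟨b, hb⟩ := h
      refine ⟨?_, Or.inl ⟨rfl, b, hb⟩⟩
      intro hh
      have : s = t := by
        have := Sum.inl.inj hh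
        exact congrArg Prod.snd this
      exact ne_of_append hb (congrArg Subtype.val this)
    · obtain ⟨b, hb⟩ := h
      refine ⟨?_, Or.inr ⟨rfl, b, hb⟩⟩
      intro hh
      have : s = t := by
        have := Sum.inl.inj hh
        exact congrArg Prod.snd this
      exact ne_of_append hb (congrArg Subtype.val this.symm)

lemma adj_inl_inr (i : Fin 2) (s : Node r) (l : Leaf r) :
    (gluedTree r 2 2).Adj (.inl (i, s)) (.inr l) ↔ ∃ b, l.val = s.val ++ [b] := by
  rw [gluedTree, SimpleGraph.fromRel_adj]
  constructor
  · rintro ⟨-, h | h⟩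
    · exact h
    · exact h.elim
  · intro h
    exact ⟨by simp, Or.inl h⟩

lemma not_adj_inr_inr (l m : Leaf r) :
    ¬ (gluedTree r 2 2).Adj (.inr l) (.inr m) := by
  rw [gluedTree, SimpleGraph.fromRel_adj]
  rintro ⟨-, h | h⟩ <;> exact h


lemma eq_dl_of_append (hr : 1 ≤ r) {s : Node r} {l : Leaf r} {b : Fin 2}
    (h : l.val = s.val ++ [b]) : s = dl hr l := by
  apply Subtype.ext
  show s.val = l.val.dropLast
  rw [h, List.dropLast_concat]

lemma adj_inr_iff (hr : 1 ≤ r) (x : gluedVert r 2 2) (l : Leaf r) :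
    (gluedTree r 2 2).Adj x (.inr l) ↔ ∃ i : Fin 2, x = .inl (i, dl hr l) := by
  cases x with
  | inl a =>
    obtain ⟨i, s⟩ := a
    rw [adj_inl_inr]
    constructor
    · rintro ⟨b, hb⟩
      exact ⟨i, by rw [eq_dl_of_append hr hb]⟩
    · rintro ⟨j, hj⟩
      obtain ⟨rfl, rfl⟩ : i = j ∧ s = dl hr l := by
        have := Sum.inl.inj hj
        exact ⟨congrArg Prod.fst this, congrArg Prod.snd this⟩
      exact ⟨_, (dl_append_getLast hr l).symm⟩
  | inr m =>
    simp only [((gluedTree r 2 2).adj_comm _ _)]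
    constructor
    · intro h; exact absurd h (not_adj_inr_inr l m)
    · rintro ⟨i, h⟩; exact absurd h (by simp)

lemma adj_tw (hr : 1 ≤ r) (x : gluedVert r 2 2) (l : Leaf r) :
    (gluedTree r 2 2).Adj x (.inr l) ↔ (gluedTree r 2 2).Adj x (.inr (tw hr l)) := by
  rw [adj_inr_iff hr, adj_inr_iff hr, dl_tw]

lemma nbhd_inr (hr : 1 ≤ r) (l : Leaf r) :
    (gluedTree r 2 2).neighborSet (.inr l) =
      {.inl (0, dl hr l), .inl (1, dl hr l)} := by
  ext x
  rw [mem_neighborSet, (gluedTree r 2 2).adj_comm, adj_inr_iff hr]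
  constructor
  · rintro ⟨i, rfl⟩
    rcases fin2_cases i with rfl | rfl
    · exact Or.inl rfl
    · exact Or.inr rfl
  · rintro (rfl | rfl)
    · exact ⟨0, rfl⟩
    · exact ⟨1, rfl⟩

lemma nbhd_tw (hr : 1 ≤ r) (l : Leaf r) :
    (gluedTree r 2 2).neighborSet (.inr (tw hr l)) =
      (gluedTree r 2 2).neighborSet (.inr l) := by
  rw [nbhd_inr hr, nbhd_inr hr, dl_tw]

lemma eq_dl_of_nbhd_eq (hr : 1 ≤ r) (l m : Leaf r)
    (h : (gluedTree r 2 2).neighborSet (.inr l) = (gluedTree r 2 2).neighborSet (.inr m)) :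
    dl hr l = dl hr m := by
  have h0 : (Sum.inl (0, dl hr l) : gluedVert r 2 2) ∈
      (gluedTree r 2 2).neighborSet (.inr m) := by
    rw [← h, nbhd_inr hr]; exact Or.inl rfl
  rw [nbhd_inr hr] at h0
  rcases h0 with h0 | h0
  · have := Sum.inl.inj h0
    exact congrArg Prod.snd this
  · have h1 : (0 : Fin 2) = 1 := congrArg Prod.fst (Sum.inl.inj h0)
    exact absurd h1 (by decide)


lemma reach_root (hr : 1 ≤ r) (i : Fin 2) :
    ∀ (lv : List (Fin 2)) (h : lv.length < r),
      (gluedTree r 2 2).Reachable (.inl (i, ⟨lv, h⟩)) (.inl (i, ⟨[], by simp; omega⟩)) := by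
  intro lv
  induction lv using List.reverseRecOn with
  | nil => intro h; exact Reachable.refl _
  | append_singleton a b ih =>
    intro h
    have hlt : a.length < r := by
      have := h; simp at this; omega
    have hadj : (gluedTree r 2 2).Adj (.inl (i, ⟨a, hlt⟩)) (.inl (i, ⟨a ++ [b], h⟩)) := by
      rw [adj_inl_inl]
      exact ⟨rfl, Or.inl ⟨b, rfl⟩⟩
    exact (hadj.reachable.symm).trans (ih hlt)

lemma preconnected (hr : 1 ≤ r) : (gluedTree r 2 2).Preconnected := by
  have key : ∀ x : gluedVert r 2 2,
      (gluedTree r 2 2).Reachable x (.inl (0, ⟨[], by simp; omega⟩)) := by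
    have hd : (List.replicate (r-1) (0 : Fin 2)).length < r := by simp; omega
    have hL : ((List.replicate (r-1) (0 : Fin 2)) ++ [0]).length = r := by simp; omega
    have hadjL : ∀ j : Fin 2, (gluedTree r 2 2).Adj (.inl (j, ⟨_, hd⟩)) (.inr ⟨_, hL⟩) := by
      intro j
      rw [adj_inl_inr]
      exact ⟨0, rfl⟩
    have hcross : ∀ j : Fin 2,
        (gluedTree r 2 2).Reachable (.inl (j, ⟨List.replicate (r-1) 0, hd⟩))
          (.inl (0, ⟨List.replicate (r-1) 0, hd⟩)) := by
      intro j
      exact (hadjL j).reachable.trans (hadjL 0).reachable.symm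
    have hnode : ∀ (j : Fin 2) (s : Node r),
        (gluedTree r 2 2).Reachable (.inl (j, s)) (.inl (0, ⟨[], by simp; omega⟩)) := by
      intro j s
      obtain ⟨sv, hs⟩ := s
      refine (reach_root hr j sv hs).trans ?_
      refine ((reach_root hr j _ hd).symm.trans ?_)
      exact (hcross j).trans (reach_root hr 0 _ hd)
    intro x
    cases x with
    | inl a => exact hnode a.1 a.2
    | inr l =>
      have : (gluedTree r 2 2).Adj (.inl (0, dl hr l)) (.inr l) := by
        rw [adj_inr_iff hr]; exact ⟨0, rfl⟩
      exact this.reachable.symm.trans (hnode 0 (dl hr l))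
  intro x y
  exact (key x).trans (key y).symm

lemma exists_middle {S : Set (gluedVert r 2 2)}
    (h : isTotalMVSet (gluedTree r 2 2) S) {u v : gluedVert r 2 2} (hne : u ≠ v)
    (hnadj : ¬ (gluedTree r 2 2).Adj u v) {z : gluedVert r 2 2}
    (hadj1 : (gluedTree r 2 2).Adj u z) (hadj2 : (gluedTree r 2 2).Adj z v) :
    ∃ w, (gluedTree r 2 2).Adj u w ∧ (gluedTree r 2 2).Adj w v ∧ w ∉ S := by
  obtain ⟨p, hp, hlen, hfree⟩ := h u v
  have hd2 : (gluedTree r 2 2).dist u v ≤ 2 := by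
    have := SimpleGraph.dist_le (Walk.cons hadj1 (Walk.cons hadj2 Walk.nil))
    simpa using this
  cases p with
  | nil => exact absurd rfl hne
  | cons h1 q =>
    cases q with
    | nil =>
      rw [SimpleGraph.Walk.length_cons, SimpleGraph.Walk.length_nil] at hlen
      rw [← hlen] at hd2
      exact absurd h1 hnadj
    | cons h2 q2 =>
      have hq2 : q2.length = 0 := by
        simp only [SimpleGraph.Walk.length_cons] at hlen
        omega
      have heq := SimpleGraph.Walk.eq_of_length_eq_zero hq2
      subst heq
      rename_i w _
      refine ⟨w, h1, h2, ?_⟩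
      intro hwS
      have hw : w ∈ (Walk.cons h1 (Walk.cons h2 q2)).support := by
        simp [SimpleGraph.Walk.support_cons]
      rcases hfree w hw hwS with rfl | rfl
      · exact (gluedTree r 2 2).loopless.irrefl _ h1
      · exact (gluedTree r 2 2).loopless.irrefl _ h2


lemma append_singleton_cancel {sv : List (Fin 2)} {b c : Fin 2}
    (h : sv ++ [b] = sv ++ [c]) : b = c := by
  have := List.append_cancel_left h
  simpa using this

lemma subset_quasiLeaves (hr : 2 ≤ r) {S : Set (gluedVert r 2 2)}
    (hS : isTotalMVSet (gluedTree r 2 2) S) : S ⊆ quasiLeaves r 2 2 := by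
  have hr1 : 1 ≤ r := by omega
  intro x hx
  cases x with
  | inr l => exact ⟨l, rfl⟩
  | inl a =>
    exfalso
    obtain ⟨i, sv, hslt⟩ := a
    rcases Nat.lt_or_ge (sv.length + 1) r with hlt | hge
    · -- x has two internal children
      have h0 : (sv ++ [(0 : Fin 2)]).length < r := by simp; omega
      have h1 : (sv ++ [(1 : Fin 2)]).length < r := by simp; omega
      set u : gluedVert r 2 2 := .inl (i, ⟨sv ++ [0], h0⟩) with hu
      set v : gluedVert r 2 2 := .inl (i, ⟨sv ++ [1], h1⟩) with hv
      have hne : u ≠ v := by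
        intro h
        have h2 : sv ++ [(0:Fin 2)] = sv ++ [1] :=
          congrArg Subtype.val (congrArg Prod.snd (Sum.inl.inj h))
        exact absurd (append_singleton_cancel h2) (by decide)
      have hnadj : ¬ (gluedTree r 2 2).Adj u v := by
        rw [hu, hv, adj_inl_inl]
        rintro ⟨-, ⟨b, hb⟩ | ⟨b, hb⟩⟩ <;>
          · have := congrArg List.length hb; simp at this
      have hadj1 : (gluedTree r 2 2).Adj u (.inl (i, ⟨sv, hslt⟩)) := by
        rw [hu, adj_inl_inl]
        exact ⟨rfl, Or.inr ⟨0, rfl⟩⟩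
      have hadj2 : (gluedTree r 2 2).Adj (.inl (i, ⟨sv, hslt⟩)) v := by
        rw [hv, adj_inl_inl]
        exact ⟨rfl, Or.inl ⟨1, rfl⟩⟩
      obtain ⟨w, hw1, hw2, hwS⟩ := exists_middle hS hne hnadj hadj1 hadj2
      have hwx : w = .inl (i, ⟨sv, hslt⟩) := by
        cases w with
        | inr m =>
          rw [hu, adj_inl_inr] at hw1
          rw [(gluedTree r 2 2).adj_comm, hv, adj_inl_inr] at hw2
          obtain ⟨b, hb⟩ := hw1
          obtain ⟨c, hc⟩ := hw2
          have hdrop : sv ++ [(0:Fin 2)] = sv ++ [1] := by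
            have e1 := congrArg List.dropLast hb
            have e2 := congrArg List.dropLast hc
            rw [List.dropLast_concat] at e1 e2
            exact e1.symm.trans e2
          exact absurd (append_singleton_cancel hdrop) (by decide)
        | inl a2 =>
          obtain ⟨j, tv, htlt⟩ := a2
          rw [hu, adj_inl_inl] at hw1
          rw [hv, adj_inl_inl] at hw2
          obtain ⟨hij, hc1⟩ := hw1
          obtain ⟨hji, hc2⟩ := hw2
          subst hij
          rcases hc1 with ⟨b, hb⟩ | ⟨b, hb⟩
          · rcases hc2 with ⟨c, hc⟩ | ⟨c, hc⟩
            · -- sv++[1] = t ++ [c], t = (sv++[0]) ++ [b] : lengths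
              have e1 := congrArg List.length hb
              have e2 := congrArg List.length hc
              simp at e1 e2
              omega
            · -- t = (sv++[0])++[b] and t = (sv++[1])++[c]
              rw [hb] at hc
              have := congrArg List.dropLast hc
              rw [List.dropLast_concat, List.dropLast_concat] at this
              exact absurd (append_singleton_cancel this) (by decide)
          · rcases hc2 with ⟨c, hc⟩ | ⟨c, hc⟩
            · -- sv++[0] = t++[b], sv++[1] = t++[c] : t = sv
              have e1 := congrArg List.dropLast hb
              rw [List.dropLast_concat, List.dropLast_concat] at e1
              congr 2
              exact Subtype.ext e1.symm
            · have e1 := congrArg List.length hb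
              have e2 := congrArg List.length hc
              simp at e1 e2
              omega
      rw [hwx] at hwS
      exact hwS hx
    · -- x is a deepest internal vertex
      have hlen : sv.length = r - 1 := by omega
      have hsv_ne : sv ≠ [] := by
        intro h; rw [h] at hlen; simp at hlen; omega
      have hdlt : sv.dropLast.length < r := by
        rw [List.length_dropLast]; omega
      have hLr : (sv ++ [(0:Fin 2)]).length = r := by simp; omega
      set u : gluedVert r 2 2 := .inl (i, ⟨sv.dropLast, hdlt⟩) with hu
      set v : gluedVert r 2 2 := .inr ⟨sv ++ [0], hLr⟩ with hv
      have hne : u ≠ v := by rw [hu, hv]; simp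
      have hnadj : ¬ (gluedTree r 2 2).Adj u v := by
        rw [hu, hv, adj_inl_inr]
        rintro ⟨b, hb⟩
        have := congrArg List.length hb
        simp [List.length_dropLast] at this
        omega
      have hadj1 : (gluedTree r 2 2).Adj u (.inl (i, ⟨sv, hslt⟩)) := by
        rw [hu, adj_inl_inl]
        exact ⟨rfl, Or.inl ⟨sv.getLast hsv_ne, (List.dropLast_append_getLast _).symm⟩⟩
      have hadj2 : (gluedTree r 2 2).Adj (.inl (i, ⟨sv, hslt⟩)) v := by
        rw [hv, adj_inl_inr]
        exact ⟨0, rfl⟩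
      obtain ⟨w, hw1, hw2, hwS⟩ := exists_middle hS hne hnadj hadj1 hadj2
      have hdlv : dl hr1 (⟨sv ++ [0], hLr⟩ : Leaf r) = ⟨sv, hslt⟩ :=
        Subtype.ext (List.dropLast_concat)
      rw [hv, adj_inr_iff hr1, hdlv] at hw2
      obtain ⟨j, rfl⟩ := hw2
      rw [hu, adj_inl_inl] at hw1
      obtain ⟨hij, -⟩ := hw1
      subst hij
      exact hwS hx

lemma no_twins (hr1 : 1 ≤ r) {S : Set (gluedVert r 2 2)}
    (hS : isTotalMVSet (gluedTree r 2 2) S) {l m : Leaf r}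
    (hl : Sum.inr l ∈ S) (hm : Sum.inr m ∈ S) (hd : dl hr1 l = dl hr1 m) : l = m := by
  by_contra hne
  have hm_tw : m = tw hr1 l := tw_of_ne hr1 l m hd hne
  set u : gluedVert r 2 2 := .inl (0, dl hr1 l) with hu
  set v : gluedVert r 2 2 := .inl (1, dl hr1 l) with hv
  have hne' : u ≠ v := by
    rw [hu, hv]
    intro h
    have : (0 : Fin 2) = 1 := congrArg Prod.fst (Sum.inl.inj h)
    exact absurd this (by decide)
  have hnadj : ¬ (gluedTree r 2 2).Adj u v := by
    rw [hu, hv, adj_inl_inl]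
    rintro ⟨h01, -⟩
    exact absurd h01 (by decide)
  have hadj1 : (gluedTree r 2 2).Adj u (.inr l) := by
    rw [adj_inr_iff hr1]; exact ⟨0, rfl⟩
  have hadj2 : (gluedTree r 2 2).Adj (.inr l) v := by
    rw [(gluedTree r 2 2).adj_comm, adj_inr_iff hr1]; exact ⟨1, rfl⟩
  obtain ⟨w, hw1, hw2, hwS⟩ := exists_middle hS hne' hnadj hadj1 hadj2
  cases w with
  | inl a =>
    obtain ⟨j, t⟩ := a
    rw [hu, adj_inl_inl] at hw1
    rw [hv, adj_inl_inl] at hw2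
    have h1 : (0 : Fin 2) = j := hw1.1
    have h2 : j = 1 := hw2.1
    rw [← h1] at h2
    exact absurd h2 (by decide)
  | inr n =>
    rw [adj_inr_iff hr1] at hw1
    obtain ⟨k, hk⟩ := hw1
    have hdn : dl hr1 n = dl hr1 l := by
      rw [hu] at hk
      have := Sum.inl.inj hk
      have h2 := congrArg Prod.snd this
      exact h2.symm
    by_cases hnl : n = l
    · rw [hnl] at hwS; exact hwS hl
    · have : n = tw hr1 l := tw_of_ne hr1 l n hdn.symm (fun h => hnl h.symm)
      rw [← hm_tw] at this
      rw [this] at hwS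
      exact hwS hm


abbrev PL (n : ℕ) := {l : List (Fin 2) // l.length = n}

instance instFintypePL (n : ℕ) : Fintype (PL n) :=
  Fintype.ofEquiv (List.Vector (Fin 2) n) ⟨id, id, fun _ => rfl, fun _ => rfl⟩

lemma card_PL (n : ℕ) : Nat.card (PL n) = 2 ^ n := by
  rw [Nat.card_eq_fintype_card]
  have h := Fintype.card_congr (⟨id, id, fun _ => rfl, fun _ => rfl⟩ :
    List.Vector (Fin 2) n ≃ PL n)
  rw [← h, card_vector]
  simp

instance instFintypeNode (r : ℕ) : Fintype (Node r) :=
  Fintype.ofSurjective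
    (fun p : Σ k : Fin r, PL k.val => (⟨p.2.val, by rw [p.2.prop]; exact p.1.isLt⟩ : Node r))
    (fun s => ⟨⟨⟨s.val.length, s.prop⟩, ⟨s.val, rfl⟩⟩, Subtype.ext rfl⟩)

instance instFintypeGV (r : ℕ) : Fintype (gluedVert r 2 2) := by
  unfold gluedVert
  infer_instance

/-- The "drop last" projection to lists of length `r-1`. -/
def dlV (x : gluedVert r 2 2) : PL (r - 1) :=
  match x with
  | .inl _ => ⟨List.replicate (r-1) 0, by simp⟩
  | .inr l => ⟨l.val.dropLast, by rw [List.length_dropLast, l.prop]⟩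

lemma dlV_inr (l : Leaf r) : (dlV (Sum.inr l) : PL (r-1)).val = l.val.dropLast := rfl

lemma dl_eq_of_dlV (hr1 : 1 ≤ r) {l m : Leaf r}
    (h : dlV (Sum.inr l) = dlV (Sum.inr m)) : dl hr1 l = dl hr1 m :=
  Subtype.ext (show l.val.dropLast = m.val.dropLast from congrArg Subtype.val h)

/-- good selections: subsets of the quasi-leaves containing exactly one of
each pair of twins. -/
def goodSel (hr1 : 1 ≤ r) (S : Set (gluedVert r 2 2)) : Prop :=
  S ⊆ quasiLeaves r 2 2 ∧ ∀ l : Leaf r, (Sum.inr l ∈ S ↔ Sum.inr (tw hr1 l) ∉ S)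

lemma ncard_le_of_twinFree (hr1 : 1 ≤ r) {T : Set (gluedVert r 2 2)}
    (hQL : T ⊆ quasiLeaves r 2 2)
    (htf : ∀ l m : Leaf r, Sum.inr l ∈ T → Sum.inr m ∈ T → dl hr1 l = dl hr1 m → l = m) :
    T.ncard ≤ 2 ^ (r - 1) := by
  have h := Set.ncard_le_ncard_of_injOn (s := T) (t := (Set.univ : Set (PL (r-1)))) dlV
    (fun a _ => Set.mem_univ (dlV a)) ?_ Set.finite_univ
  · rwa [Set.ncard_univ, card_PL] at h
  · intro x hx y hy hxy
    obtain ⟨l, rfl⟩ := hQL hx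
    obtain ⟨m, rfl⟩ := hQL hy
    exact congrArg Sum.inr (htf l m hx hy (dl_eq_of_dlV hr1 hxy))

lemma pl_append_length (hr1 : 1 ≤ r) (d : PL (r - 1)) (b : Fin 2) :
    (d.val ++ [b]).length = r := by
  rw [List.length_append, d.prop]; simp; omega

/-- The selection set determined by a choice function `f`. -/
def selSet (hr1 : 1 ≤ r) (f : PL (r - 1) → Fin 2) : Set (gluedVert r 2 2) :=
  Set.range (fun d : PL (r-1) => Sum.inr ⟨d.val ++ [f d], pl_append_length hr1 d (f d)⟩)

lemma dropLast_length (hr1 : 1 ≤ r) (l : Leaf r) : l.val.dropLast.length = r - 1 := by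
  rw [List.length_dropLast, l.prop]

lemma mem_selSet (hr1 : 1 ≤ r) (f : PL (r - 1) → Fin 2) (l : Leaf r) :
    Sum.inr l ∈ selSet hr1 f ↔
      f ⟨l.val.dropLast, dropLast_length hr1 l⟩ = l.val.getLast (leaf_ne_nil hr1 l) := by
  constructor
  · rintro ⟨d, hd⟩
    have hl : l = ⟨d.val ++ [f d], pl_append_length hr1 d (f d)⟩ := (Sum.inr.inj hd).symm
    have h1 : (⟨l.val.dropLast, dropLast_length hr1 l⟩ : PL (r-1)) = d := by
      apply Subtype.ext
      rw [hl]
      exact List.dropLast_concat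
    have h2 : l.val.getLast (leaf_ne_nil hr1 l) = f d := by
      have : l.val = d.val ++ [f d] := congrArg Subtype.val hl
      rw [List.getLast_congr _ _ this]
      exact List.getLast_append_singleton _
    rw [h1, h2]
  · intro h
    refine ⟨⟨l.val.dropLast, dropLast_length hr1 l⟩, ?_⟩
    apply congrArg Sum.inr
    apply Subtype.ext
    show l.val.dropLast ++ [_] = l.val
    rw [h]
    exact List.dropLast_append_getLast _

lemma selSet_subset_quasiLeaves (hr1 : 1 ≤ r) (f : PL (r - 1) → Fin 2) :
    selSet hr1 f ⊆ quasiLeaves r 2 2 := by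
  rintro x ⟨d, rfl⟩
  exact ⟨_, rfl⟩

lemma goodSel_selSet (hr1 : 1 ≤ r) (f : PL (r - 1) → Fin 2) : goodSel hr1 (selSet hr1 f) := by
  refine ⟨selSet_subset_quasiLeaves hr1 f, fun l => ?_⟩
  rw [mem_selSet hr1, mem_selSet hr1]
  have hdl : (⟨(tw hr1 l).val.dropLast, dropLast_length hr1 _⟩ : PL (r-1)) =
      ⟨l.val.dropLast, dropLast_length hr1 l⟩ :=
    Subtype.ext (show (tw hr1 l).val.dropLast = l.val.dropLast from
      congrArg Subtype.val (dl_tw hr1 l))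
  rw [hdl, getLast_tw hr1 l]
  generalize f ⟨l.val.dropLast, dropLast_length hr1 l⟩ = a
  generalize l.val.getLast (leaf_ne_nil hr1 l) = g
  revert a g
  decide

lemma selSet_injective (hr1 : 1 ≤ r) : Function.Injective (selSet hr1) := by
  intro f g hfg
  funext d
  have h1 : Sum.inr (⟨d.val ++ [f d], pl_append_length hr1 d (f d)⟩ : Leaf r) ∈ selSet hr1 f :=
    ⟨d, rfl⟩
  rw [hfg, mem_selSet hr1] at h1
  have h2 : (⟨(⟨d.val ++ [f d], pl_append_length hr1 d (f d)⟩ : Leaf r).val.dropLast,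
      dropLast_length hr1 _⟩ : PL (r-1)) = d := Subtype.ext List.dropLast_concat
  rw [h2] at h1
  rw [h1]
  exact (List.getLast_append_singleton _).symm

lemma goodSel_eq_selSet (hr1 : 1 ≤ r) {S : Set (gluedVert r 2 2)} (h : goodSel hr1 S) :
    ∃ f : PL (r - 1) → Fin 2, S = selSet hr1 f := by
  classical
  set f : PL (r-1) → Fin 2 := fun d =>
    if Sum.inr (⟨d.val ++ [0], pl_append_length hr1 d 0⟩ : Leaf r) ∈ S then 0 else 1 with hf
  have tw0 : ∀ d : PL (r-1), tw hr1 (⟨d.val ++ [0], pl_append_length hr1 d 0⟩ : Leaf r) =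
      ⟨d.val ++ [1], pl_append_length hr1 d 1⟩ := by
    intro d
    apply Subtype.ext
    show _ ++ [1 - List.getLast _ _] = _
    rw [List.getLast_congr _ _ (rfl : (⟨d.val ++ [0], pl_append_length hr1 d 0⟩ : Leaf r).val = d.val ++ [0])]
    rw [List.getLast_append_singleton, List.dropLast_concat]
    norm_num
    exact leaf_ne_nil hr1 _
  refine ⟨f, Set.Subset.antisymm ?_ ?_⟩
  · intro x hx
    obtain ⟨l, rfl⟩ := h.1 hx
    set d : PL (r-1) := ⟨l.val.dropLast, dropLast_length hr1 l⟩ with hd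
    refine (mem_selSet hr1 f l).mpr ?_
    rcases fin2_cases (l.val.getLast (leaf_ne_nil hr1 l)) with hg | hg
    · rw [hg]
      have hl0 : l = ⟨d.val ++ [0], pl_append_length hr1 d 0⟩ := by
        apply Subtype.ext
        show l.val = l.val.dropLast ++ [0]
        rw [← hg]
        exact (List.dropLast_append_getLast _).symm
      rw [hf]
      simp only
      rw [if_pos (hl0 ▸ hx)]
    · rw [hg]
      have hl1 : l = ⟨d.val ++ [1], pl_append_length hr1 d 1⟩ := by
        apply Subtype.ext
        show l.val = l.val.dropLast ++ [1]
        rw [← hg]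
        exact (List.dropLast_append_getLast _).symm
      have h0 : Sum.inr (⟨d.val ++ [0], pl_append_length hr1 d 0⟩ : Leaf r) ∉ S := by
        intro h0
        have := (h.2 _).mp h0
        rw [tw0 d, ← hl1] at this
        exact this hx
      rw [hf]
      simp only
      rw [if_neg h0]
  · rintro x ⟨d, rfl⟩
    by_cases h0 : Sum.inr (⟨d.val ++ [0], pl_append_length hr1 d 0⟩ : Leaf r) ∈ S
    · have hfd : f d = 0 := by rw [hf]; simp only; rw [if_pos h0]
      have : (⟨d.val ++ [f d], pl_append_length hr1 d (f d)⟩ : Leaf r) =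
          ⟨d.val ++ [0], pl_append_length hr1 d 0⟩ := by
        apply Subtype.ext; rw [hfd]
      show Sum.inr ⟨d.val ++ [f d], pl_append_length hr1 d (f d)⟩ ∈ S
      rw [this]
      exact h0
    · have hfd : f d = 1 := by rw [hf]; simp only; rw [if_neg h0]
      have h1 : Sum.inr (⟨d.val ++ [1], pl_append_length hr1 d 1⟩ : Leaf r) ∈ S := by
        by_contra h1
        rw [← tw0 d] at h1
        exact h0 ((h.2 _).mpr h1)
      have : (⟨d.val ++ [f d], pl_append_length hr1 d (f d)⟩ : Leaf r) =
          ⟨d.val ++ [1], pl_append_length hr1 d 1⟩ := by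
        apply Subtype.ext; rw [hfd]
      show Sum.inr ⟨d.val ++ [f d], pl_append_length hr1 d (f d)⟩ ∈ S
      rw [this]
      exact h1

lemma ncard_selSet (hr1 : 1 ≤ r) (f : PL (r - 1) → Fin 2) :
    (selSet hr1 f).ncard = 2 ^ (r - 1) := by
  have hinj : Function.Injective
      (fun d : PL (r-1) => (Sum.inr ⟨d.val ++ [f d], pl_append_length hr1 d (f d)⟩ :
        gluedVert r 2 2)) := by
    intro d d' hdd
    have := congrArg Subtype.val (Sum.inr.inj hdd)
    have h2 := congrArg List.dropLast this
    rw [List.dropLast_concat, List.dropLast_concat] at h2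
    exact Subtype.ext h2
  rw [selSet, ← Set.image_univ, Set.ncard_image_of_injective _ hinj, Set.ncard_univ, card_PL]

lemma ncard_goodSel (hr1 : 1 ≤ r) {S : Set (gluedVert r 2 2)} (h : goodSel hr1 S) :
    S.ncard = 2 ^ (r - 1) := by
  obtain ⟨f, rfl⟩ := goodSel_eq_selSet hr1 h
  exact ncard_selSet hr1 f

lemma ncard_le_of_missing_pair (hr1 : 1 ≤ r) {S : Set (gluedVert r 2 2)}
    (hQL : S ⊆ quasiLeaves r 2 2)
    (htf : ∀ l m : Leaf r, Sum.inr l ∈ S → Sum.inr m ∈ S → dl hr1 l = dl hr1 m → l = m)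
    {l : Leaf r} (h0 : Sum.inr l ∉ S) (h1 : Sum.inr (tw hr1 l) ∉ S) :
    S.ncard ≤ 2 ^ (r - 1) - 1 := by
  have h := Set.ncard_le_ncard_of_injOn (s := S) (t := (Set.univ \ {dlV (Sum.inr l)})) dlV ?_ ?_ ?_
  · rwa [Set.ncard_diff_singleton_of_mem (Set.mem_univ _), Set.ncard_univ, card_PL] at h
  · intro x hx
    obtain ⟨m, rfl⟩ := hQL hx
    refine ⟨Set.mem_univ _, ?_⟩
    intro hmem
    have hdml : dl hr1 m = dl hr1 l := dl_eq_of_dlV hr1 hmem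
    by_cases hml : m = l
    · rw [hml] at hx; exact h0 hx
    · have := tw_of_ne hr1 l m hdml.symm (fun hh => hml hh.symm)
      rw [← this] at h1
      exact h1 hx
  · intro x hx y hy hxy
    obtain ⟨a, rfl⟩ := hQL hx
    obtain ⟨b, rfl⟩ := hQL hy
    exact congrArg Sum.inr (htf a b hx hy (dl_eq_of_dlV hr1 hxy))
  · exact Set.finite_univ.diff

variable {V : Type*} {G : SimpleGraph V}

def fixW (S : Set V) (t : V → V)
    (H : ∀ ⦃y⦄, y ∈ S → ∀ ⦃x⦄, G.Adj x y → G.Adj x (t y)) [DecidablePred (· ∈ S)] :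
    ∀ {x v : V}, G.Walk x v → G.Walk x v
  | _, _, .nil => .nil
  | _, _, .cons h .nil => .cons h .nil
  | _, _, .cons h (.cons h' q) =>
    if hy : _ ∈ S then
      .cons (H hy h) (fixW S t H (.cons ((H hy h'.symm).symm) q))
    else
      .cons h (fixW S t H (.cons h' q))
  termination_by x v p => p.length
  decreasing_by all_goals simp [SimpleGraph.Walk.length_cons]

lemma fixW_length (S : Set V) (t : V → V)
    (H : ∀ ⦃y⦄, y ∈ S → ∀ ⦃x⦄, G.Adj x y → G.Adj x (t y)) [DecidablePred (· ∈ S)]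
    {x v : V} (p : G.Walk x v) : (fixW S t H p).length = p.length := by
  induction x, v, p using fixW.induct S t H with
  | case1 => simp [fixW]
  | case2 => simp [fixW]
  | case3 a b c d hadj hmem hadj2 q ih =>
    rw [fixW]
    simp only [dif_pos hmem, SimpleGraph.Walk.length_cons, ih]
  | case4 a b c d hadj hmem hadj2 q ih =>
    rw [fixW]
    simp only [dif_neg hmem, SimpleGraph.Walk.length_cons, ih]

lemma fixW_support (S : Set V) (t : V → V)
    (H : ∀ ⦃y⦄, y ∈ S → ∀ ⦃x⦄, G.Adj x y → G.Adj x (t y)) [DecidablePred (· ∈ S)]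
    (ht : ∀ ⦃y⦄, y ∈ S → t y ∉ S)
    {x v : V} (p : G.Walk x v) :
    ∀ w ∈ (fixW S t H p).support, w ∉ S ∨ w = x ∨ w = v := by
  induction x, v, p using fixW.induct S t H with
  | case1 x =>
    intro w hw
    rw [fixW] at hw
    simp at hw
    exact Or.inr (Or.inl hw)
  | case2 x y h =>
    intro w hw
    rw [fixW] at hw
    simp [SimpleGraph.Walk.support_cons] at hw
    rcases hw with rfl | rfl
    · exact Or.inr (Or.inl rfl)
    · exact Or.inr (Or.inr rfl)
  | case3 a b c d hadj hmem hadj2 q ih =>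
    intro w hw
    rw [fixW] at hw
    simp only [dif_pos hmem, SimpleGraph.Walk.support_cons, List.mem_cons] at hw
    rcases hw with rfl | hw
    · exact Or.inr (Or.inl rfl)
    · rcases ih w hw with h1 | h1 | h1
      · exact Or.inl h1
      · exact Or.inl (h1 ▸ ht hmem)
      · exact Or.inr (Or.inr h1)
  | case4 a b c d hadj hmem hadj2 q ih =>
    intro w hw
    rw [fixW] at hw
    simp only [dif_neg hmem, SimpleGraph.Walk.support_cons, List.mem_cons] at hw
    rcases hw with rfl | hw
    · exact Or.inr (Or.inl rfl)
    · rcases ih w hw with h1 | h1 | h1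
      · exact Or.inl h1
      · exact Or.inl (h1 ▸ hmem)
      · exact Or.inr (Or.inr h1)

lemma isVisible_of_reachable (S : Set V) (t : V → V)
    (H : ∀ ⦃y⦄, y ∈ S → ∀ ⦃x⦄, G.Adj x y → G.Adj x (t y))
    (ht : ∀ ⦃y⦄, y ∈ S → t y ∉ S)
    {u v : V} (hr : G.Reachable u v) : isVisible G S u v := by
  classical
  obtain ⟨p, hp⟩ := hr.exists_walk_length_eq_dist
  refine ⟨fixW S t H p, ?_, ?_, ?_⟩
  · exact SimpleGraph.Walk.isPath_of_length_eq_dist _ (by rw [fixW_length]; exact hp)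
  · rw [fixW_length]; exact hp
  · intro w hw hwS
    rcases fixW_support S t H ht p w hw with h1 | h1 | h1
    · exact absurd hwS h1
    · exact Or.inl h1
    · exact Or.inr h1


lemma tmv_goodSel (hr1 : 1 ≤ r) {S : Set (gluedVert r 2 2)} (h : goodSel hr1 S) :
    isTotalMVSet (gluedTree r 2 2) S := by
  intro u v
  refine isVisible_of_reachable S (fun x => match x with
    | .inl a => .inl a
    | .inr l => .inr (tw hr1 l)) ?_ ?_ (preconnected hr1 u v)
  · intro y hy x hadj
    obtain ⟨l, rfl⟩ := h.1 hy
    exact (adj_tw hr1 x l).mp hadj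
  · intro y hy
    obtain ⟨l, rfl⟩ := h.1 hy
    exact (h.2 l).mp hy

lemma goodSel_iff_char (hr1 : 1 ≤ r) (S : Set (gluedVert r 2 2)) :
    goodSel hr1 S ↔
      (S ⊆ quasiLeaves r 2 2 ∧
        ∀ u ∈ quasiLeaves r 2 2, ∀ v ∈ quasiLeaves r 2 2, u ≠ v →
          (gluedTree r 2 2).neighborSet u = (gluedTree r 2 2).neighborSet v →
          (u ∈ S ↔ v ∉ S)) := by
  constructor
  · rintro ⟨hQL, hiff⟩
    refine ⟨hQL, ?_⟩
    rintro u ⟨l, rfl⟩ v ⟨m, rfl⟩ hne hnb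
    have hlm : l ≠ m := fun h => hne (congrArg Sum.inr h)
    have hd : dl hr1 l = dl hr1 m := eq_dl_of_nbhd_eq hr1 l m hnb
    have : m = tw hr1 l := tw_of_ne hr1 l m hd hlm
    rw [this]
    exact hiff l
  · rintro ⟨hQL, hchar⟩
    refine ⟨hQL, fun l => ?_⟩
    refine hchar _ ⟨l, rfl⟩ _ ⟨tw hr1 l, rfl⟩ ?_ (nbhd_tw hr1 l).symm
    intro h
    exact tw_ne hr1 l (Sum.inr.inj h).symm

lemma maxTMV_iff_goodSel (hr : 2 ≤ r) (hr1 : 1 ≤ r) (S : Set (gluedVert r 2 2)) :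
    (isTotalMVSet (gluedTree r 2 2) S ∧
      ∀ T : Set (gluedVert r 2 2), isTotalMVSet (gluedTree r 2 2) T →
        T.ncard ≤ S.ncard) ↔ goodSel hr1 S := by
  constructor
  · rintro ⟨hS, hmax⟩
    have hQL := subset_quasiLeaves hr hS
    refine ⟨hQL, fun l => ⟨fun hl htw => ?_, fun htw => ?_⟩⟩
    · exact tw_ne hr1 l (no_twins hr1 hS htw hl (dl_tw hr1 l))
    · by_contra hl
      have hS0 := goodSel_selSet hr1 (fun _ => 0)
      have hge : 2 ^ (r-1) ≤ S.ncard := by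
        rw [← ncard_selSet hr1 (fun _ => 0)]
        exact hmax _ (tmv_goodSel hr1 hS0)
      have hle := ncard_le_of_missing_pair hr1 hQL
        (fun a b ha hb hd => no_twins hr1 hS ha hb hd) hl htw
      have hpos : 1 ≤ 2 ^ (r-1) := Nat.one_le_two_pow
      omega
  · intro hgood
    refine ⟨tmv_goodSel hr1 hgood, fun T hT => ?_⟩
    rw [ncard_goodSel hr1 hgood]
    exact ncard_le_of_twinFree hr1 (subset_quasiLeaves hr hT)
      (fun a b ha hb hd => no_twins hr1 hT ha hb hd)


end GTaux

theorem stmt9 (r : ℕ) (hr : 2 ≤ r) :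
    (∀ S : Set (gluedVert r 2 2),
      (isTotalMVSet (gluedTree r 2 2) S ∧
        ∀ T : Set (gluedVert r 2 2), isTotalMVSet (gluedTree r 2 2) T →
          T.ncard ≤ S.ncard) ↔
      (S ⊆ quasiLeaves r 2 2 ∧
        ∀ u ∈ quasiLeaves r 2 2, ∀ v ∈ quasiLeaves r 2 2, u ≠ v →
          (gluedTree r 2 2).neighborSet u = (gluedTree r 2 2).neighborSet v →
          (u ∈ S ↔ v ∉ S))) ∧
    {S : Set (gluedVert r 2 2) | isTotalMVSet (gluedTree r 2 2) S ∧
        ∀ T : Set (gluedVert r 2 2), isTotalMVSet (gluedTree r 2 2) T →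
          T.ncard ≤ S.ncard}.ncard = 2 ^ 2 ^ (r - 1) := by
  have hr1 : 1 ≤ r := by omega
  constructor
  · intro S
    rw [GTaux.maxTMV_iff_goodSel hr hr1 S, GTaux.goodSel_iff_char hr1 S]
  · have hset : {S : Set (gluedVert r 2 2) | isTotalMVSet (gluedTree r 2 2) S ∧
        ∀ T : Set (gluedVert r 2 2), isTotalMVSet (gluedTree r 2 2) T → T.ncard ≤ S.ncard}
        = Set.range (GTaux.selSet hr1) := by
      ext S
      rw [Set.mem_setOf_eq, GTaux.maxTMV_iff_goodSel hr hr1 S]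
      constructor
      · intro h
        obtain ⟨f, rfl⟩ := GTaux.goodSel_eq_selSet hr1 h
        exact ⟨f, rfl⟩
      · rintro ⟨f, rfl⟩
        exact GTaux.goodSel_selSet hr1 f
    rw [hset, ← Set.image_univ, Set.ncard_image_of_injective _ (GTaux.selSet_injective hr1),
      Set.ncard_univ, Nat.card_eq_fintype_card, Fintype.card_fun]
    have hc : Fintype.card (GTaux.PL (r-1)) = 2 ^ (r-1) := by
      have := GTaux.card_PL (r-1)
      rwa [Nat.card_eq_fintype_card] at this
    rw [hc, Fintype.card_fin]
end

section
/- For r ≥ 2, the outer general position number of GT(r) equals 2^r, and the set of quasi-leaves is the unique maximum outer general position set. -/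
open SimpleGraph

namespace GT



def lcp : List (Fin 2) → List (Fin 2) → ℕ
  | a :: as, b :: bs => if a = b then lcp as bs + 1 else 0
  | _, _ => 0

lemma lcp_nil_left (b : List (Fin 2)) : lcp [] b = 0 := by cases b <;> rfl
lemma lcp_nil_right (a : List (Fin 2)) : lcp a [] = 0 := by cases a <;> rfl

lemma lcp_comm : ∀ a b : List (Fin 2), lcp a b = lcp b a
  | [], b => by rw [lcp_nil_left, lcp_nil_right]
  | a, [] => by rw [lcp_nil_left, lcp_nil_right]
  | x :: a, y :: b => by
      simp only [lcp]
      rcases eq_or_ne x y with h | h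
      · simp [h, lcp_comm a b]
      · simp [h, Ne.symm h]

lemma lcp_le_left : ∀ a b : List (Fin 2), lcp a b ≤ a.length
  | [], b => by simp [lcp_nil_left]
  | a, [] => by simp [lcp_nil_right]
  | x :: a, y :: b => by
      simp only [lcp]
      split
      · simpa using lcp_le_left a b
      · simp

lemma lcp_le_right (a b : List (Fin 2)) : lcp a b ≤ b.length := by
  rw [lcp_comm]; exact lcp_le_left b a

lemma lcp_self : ∀ a : List (Fin 2), lcp a a = a.length
  | [] => rfl
  | x :: a => by simp [lcp, lcp_self a]

lemma take_lcp_eq : ∀ a b : List (Fin 2), a.take (lcp a b) = b.take (lcp a b)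
  | [], b => by simp [lcp_nil_left]
  | a, [] => by simp [lcp_nil_right]
  | x :: a, y :: b => by
      simp only [lcp]
      split
      · next h => simp [h, take_lcp_eq a b]
      · simp

lemma le_lcp_of_take_eq : ∀ (k : ℕ) (a b : List (Fin 2)), k ≤ a.length → k ≤ b.length →
    a.take k = b.take k → k ≤ lcp a b
  | 0, _, _, _, _, _ => Nat.zero_le _
  | k + 1, [], b, ha, _, _ => by simp at ha
  | k + 1, a, [], _, hb, _ => by simp at hb
  | k + 1, x :: a, y :: b, ha, hb, h => by
      simp only [List.take_succ_cons, List.cons.injEq] at h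
      simp only [lcp, h.1, if_true]
      have := le_lcp_of_take_eq k a b (by simpa using ha) (by simpa using hb) h.2
      omega

/-- The prefixes of length `lcp+1` differ (when they exist). -/
lemma take_succ_lcp_ne (a b : List (Fin 2)) (h1 : lcp a b < a.length) (h2 : lcp a b < b.length) :
    a.take (lcp a b + 1) ≠ b.take (lcp a b + 1) := by
  intro h
  have := le_lcp_of_take_eq (lcp a b + 1) a b h1 h2 h
  omega

lemma lcp_eq_left_iff_prefix {a b : List (Fin 2)} : lcp a b = a.length ↔ a <+: b := by
  constructor
  · intro h
    rw [List.prefix_iff_eq_take]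
    conv_lhs => rw [← List.take_length (l := a), ← h, take_lcp_eq]
    rw [h]
  · intro h
    have h1 := le_lcp_of_take_eq a.length a b le_rfl h.length_le
      (by conv_lhs => rw [List.take_length]
          exact (List.prefix_iff_eq_take).mp h)
    have := lcp_le_left a b
    omega

lemma prefix_lcp_eq {a b : List (Fin 2)} (h : a <+: b) : lcp a b = a.length :=
  lcp_eq_left_iff_prefix.mpr h

lemma min_lcp_le (a b c : List (Fin 2)) : min (lcp a b) (lcp b c) ≤ lcp a c := by
  set k := min (lcp a b) (lcp b c) with hk
  apply le_lcp_of_take_eq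
  · exact le_trans (min_le_left _ _) (lcp_le_left a b)
  · exact le_trans (min_le_right _ _) (lcp_le_right b c)
  · have h1 : a.take k = b.take k := by
      have := congrArg (fun l => List.take k l) (take_lcp_eq a b)
      simpa [List.take_take, Nat.min_eq_left (show k ≤ lcp a b from min_le_left (lcp a b) (lcp b c))] using this
    have h2 : b.take k = c.take k := by
      have := congrArg (fun l => List.take k l) (take_lcp_eq b c)
      simpa [List.take_take, Nat.min_eq_left (show k ≤ lcp b c from min_le_right (lcp a b) (lcp b c))] using this
    rw [h1, h2]

/-- Characterization used to compute `lcp`. -/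
lemma lcp_eq_of_take (c : ℕ) (a b : List (Fin 2)) (hca : c ≤ a.length) (hcb : c ≤ b.length)
    (h : a.take c = b.take c)
    (h2 : a.take (c+1) ≠ b.take (c+1) ∨ c = a.length ∨ c = b.length) : lcp a b = c := by
  have hle := le_lcp_of_take_eq c a b hca hcb h
  rcases Nat.lt_or_ge (lcp a b) (c + 1) with h' | h'
  · omega
  · exfalso
    have hla := lcp_le_left a b
    have hlb := lcp_le_right a b
    have : a.take (c+1) = b.take (c+1) := by
      have := congrArg (fun l => List.take (c+1) l) (take_lcp_eq a b)
      simpa [List.take_take, Nat.min_eq_left h'] using this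
    rcases h2 with h2 | h2 | h2
    · exact h2 this
    · omega
    · omega

lemma lcp_snoc_ge (m s : List (Fin 2)) (b : Fin 2) : lcp m s ≤ lcp m (s ++ [b]) := by
  apply le_lcp_of_take_eq _ _ _ (lcp_le_left m s)
  · have := lcp_le_right m s; simp; omega
  · rw [List.take_append_of_le_length (lcp_le_right m s), ← take_lcp_eq]

lemma lcp_snoc_le (m s : List (Fin 2)) (b : Fin 2) : lcp m (s ++ [b]) ≤ lcp m s + 1 := by
  by_contra h
  push_neg at h
  have h1 : lcp m s + 1 ≤ lcp m (s ++ [b]) := by omega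
  have h2 := lcp_le_right m (s ++ [b])
  simp only [List.length_append, List.length_cons, List.length_nil] at h2
  have h3 : lcp m s + 1 ≤ s.length + 1 := by omega
  have h4 : lcp m s + 1 ≤ m.length := le_trans h1 (lcp_le_left m (s ++ [b]))
  have : m.take (lcp m s + 1) = s.take (lcp m s + 1) := by
    have heq := take_lcp_eq m (s ++ [b])
    have := congrArg (fun l => List.take (lcp m s + 1) l) heq
    simp only [List.take_take, Nat.min_eq_left h1] at this
    rw [this]
    rcases Nat.lt_or_ge (lcp m s) s.length with hc | hc
    · rw [List.take_append_of_le_length (by omega)]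
    · have : lcp m s = s.length := le_antisymm (lcp_le_right m s) hc
      exfalso
      have : s <+: m := by
        rw [lcp_comm] at this
        exact lcp_eq_left_iff_prefix.mp this
      have := prefix_lcp_eq (a := s) (b := m) this
      rw [lcp_comm] at this
      omega
  have := le_lcp_of_take_eq _ _ _ h4 (by omega) this
  omega

/-- `lcp` with an extension of `b`, when `lcp a b < b.length`. -/
lemma lcp_append_eq (a b z : List (Fin 2)) (h : lcp a b < b.length) : lcp a (b ++ z) = lcp a b := by
  apply lcp_eq_of_take _ _ _ (lcp_le_left a b) (by simp; have := lcp_le_right a b; omega)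
  · rw [List.take_append_of_le_length (le_of_lt h), ← take_lcp_eq]
  · rcases Nat.lt_or_ge (lcp a b) a.length with hc | hc
    · left
      rw [List.take_append_of_le_length (by omega)]
      exact take_succ_lcp_ne a b hc h
    · right; left
      have := lcp_le_left a b; omega




variable {r : ℕ}

lemma adj_iff {x y : gluedVert r 2 2} :
    (gluedTree r 2 2).Adj x y ↔ x ≠ y ∧ (gluedAdj r 2 2 x y ∨ gluedAdj r 2 2 y x) := by
  simp [gluedTree, fromRel_adj]

lemma adj_internal (i : Fin 2) (t : List (Fin 2)) (b : Fin 2) (ht : t.length < r)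
    (h : (t ++ [b]).length < r) :
    (gluedTree r 2 2).Adj (Sum.inl (i, ⟨t, ht⟩)) (Sum.inl (i, ⟨t ++ [b], h⟩)) := by
  rw [adj_iff]
  refine ⟨?_, Or.inl ⟨rfl, b, rfl⟩⟩
  intro hxy
  simp only [Sum.inl.injEq, Prod.mk.injEq, Subtype.mk.injEq] at hxy
  have := congrArg List.length hxy.2
  simp at this

lemma adj_leaf (i : Fin 2) (t : List (Fin 2)) (b : Fin 2) (ht : t.length < r)
    {l : List (Fin 2)} (hl : l.length = r) (he : l = t ++ [b]) :
    (gluedTree r 2 2).Adj (Sum.inl (i, ⟨t, ht⟩)) (Sum.inr ⟨l, hl⟩) := by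
  rw [adj_iff]
  exact ⟨by simp, Or.inl ⟨b, he⟩⟩

/-- The `j`-prefix vertex helper. -/
def nd (i : Fin 2) (z : List (Fin 2)) (j : ℕ) (hj : min j z.length < r) : gluedVert r 2 2 :=
  Sum.inl (i, ⟨z.take j, by rw [List.length_take]; exact hj⟩)

lemma nd_congr {i : Fin 2} {z z' : List (Fin 2)} {j j' : ℕ} {h h'}
    (hz : z.take j = z'.take j') : nd (r := r) i z j h = nd i z' j' h' := by
  simp [nd, hz]

/-- Walk going down inside a copy. -/
def downI (i : Fin 2) : (t u : List (Fin 2)) → (h : (t ++ u).length < r) →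
    (gluedTree r 2 2).Walk (Sum.inl (i, ⟨t, by simp at h; omega⟩)) (Sum.inl (i, ⟨t ++ u, h⟩))
  | t, [], h => Walk.nil.copy rfl (by simp)
  | t, b :: u, h =>
      Walk.cons (adj_internal i t b (by simp at h; omega) (by simp at h ⊢; omega))
        ((downI i (t ++ [b]) u (by simpa using h)).copy rfl (by simp))

lemma length_downI (i : Fin 2) (t u : List (Fin 2)) (h : (t ++ u).length < r) :
    (downI i t u h).length = u.length := by
  induction u generalizing t with
  | nil => simp [downI]
  | cons b u ih => simp [downI, ih]

lemma mem_support_downI (i : Fin 2) (t u : List (Fin 2)) (h : (t ++ u).length < r)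
    (j : ℕ) (hj1 : t.length ≤ j) (hj2 : j ≤ (t ++ u).length) (hj3 : min j (t++u).length < r) :
    nd i (t ++ u) j hj3 ∈ (downI i t u h).support := by
  induction u generalizing t with
  | nil =>
    simp only [downI, Walk.support_copy, Walk.support_nil, List.mem_singleton]
    simp only [nd, Sum.inl.injEq, Prod.mk.injEq, Subtype.mk.injEq, true_and]
    simp only [List.append_nil] at hj2 ⊢
    rw [List.take_of_length_le (by omega)]
  | cons b u ih =>
    simp only [downI, Walk.support_cons, Walk.support_copy, List.mem_cons]
    rcases eq_or_lt_of_le hj1 with he | hlt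
    · left
      simp only [nd, Sum.inl.injEq, Prod.mk.injEq, Subtype.mk.injEq, true_and]
      rw [← he, List.take_left]
    · right
      have hj3' : min j ((t ++ [b]) ++ u).length < r := by simpa using hj3
      have := ih (t ++ [b]) (by simpa using h) (by simp; omega) (by simpa using hj2) hj3'
      convert this using 1
      exact nd_congr (by rw [List.append_assoc]; rfl)

lemma tlen {t u : List (Fin 2)} (hu : u ≠ []) (h : (t ++ u).length = r) :
    t.length < r ∧ (t ++ u.dropLast).length < r := by
  rcases u with _|⟨c,u⟩
  · simp at hu
  · simp at h ⊢; omega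

/-- Walk going down inside a copy, ending at a quasi-leaf. -/
def downL (i : Fin 2) (t u : List (Fin 2)) (h : (t ++ u).length = r) (hu : u ≠ []) :
    (gluedTree r 2 2).Walk (Sum.inl (i, ⟨t, (tlen hu h).1⟩))
      (Sum.inr ⟨t ++ u, h⟩) :=
  (((downI i t u.dropLast (tlen hu h).2).copy (by rfl) rfl).append
    (Walk.cons (adj_leaf i (t ++ u.dropLast) (u.getLast hu) (tlen hu h).2 h
      (by rw [List.append_assoc, List.dropLast_append_getLast hu])) Walk.nil))

lemma length_downL (i : Fin 2) (t u : List (Fin 2)) (h : (t ++ u).length = r) (hu : u ≠ []) :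
    (downL i t u h hu).length = u.length := by
  simp [downL, length_downI]
  rcases u with _|⟨c,u⟩
  · simp at hu
  · simp

lemma mem_support_downL (i : Fin 2) (t u : List (Fin 2)) (h : (t ++ u).length = r) (hu : u ≠ [])
    (j : ℕ) (hj1 : t.length ≤ j) (hj3 : min j (t++u).length < r) :
    nd i (t ++ u) j hj3 ∈ (downL i t u h hu).support := by
  have hlen : (t ++ u.dropLast).length = r - 1 := by
    rcases u with _|⟨c,u⟩
    · simp at hu
    · simp at h ⊢; omega
  have hjr : j < r := by
    have hr := h
    omega
  rw [downL, Walk.mem_support_append_iff]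
  left
  rw [Walk.support_copy]
  have hj2 : j ≤ (t ++ u.dropLast).length := by rw [hlen]; omega
  have hlt : (t ++ u.dropLast).length < r := by rw [hlen]; omega
  have hmin : min j (t ++ u.dropLast).length < r := by rw [hlen]; omega
  have := mem_support_downI i t u.dropLast hlt j hj1 hj2 hmin
  convert this using 1
  apply nd_congr
  have hpre : (t ++ u.dropLast) <+: (t ++ u) := ⟨[u.getLast hu], by
    rw [List.append_assoc, List.dropLast_append_getLast hu]⟩
  conv_rhs => rw [List.prefix_iff_eq_take.mp hpre]
  rw [List.take_take, Nat.min_eq_left hj2]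

lemma end_mem_support_downL (i : Fin 2) (t u : List (Fin 2)) (h : (t ++ u).length = r)
    (hu : u ≠ []) : Sum.inr ⟨t ++ u, h⟩ ∈ (downL i t u h hu).support :=
  Walk.end_mem_support _

/-- Distance potential from the quasi-leaf `m`. -/
def pot (m : List (Fin 2)) : gluedVert r 2 2 → ℕ
  | Sum.inl (_, s) => (r - lcp m s.1) + (s.1.length - lcp m s.1)
  | Sum.inr l => (r - lcp m l.1) + (r - lcp m l.1)

lemma pot_step {m : List (Fin 2)} (hm : m.length = r) {x y : gluedVert r 2 2}
    (h : gluedAdj r 2 2 x y) : pot m y ≤ pot m x + 1 ∧ pot m x ≤ pot m y + 1 := by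
  rcases x with ⟨i, s, hs⟩ | l
  · rcases y with ⟨i', s', hs'⟩ | ⟨l', hl'⟩
    · obtain ⟨-, b, hb⟩ := h
      subst hb
      have h1 := lcp_snoc_ge m s b
      have h2 := lcp_snoc_le m s b
      have h3 := lcp_le_left m s
      have h4 := lcp_le_right m s
      rw [hm] at h3
      simp only [pot, List.length_append, List.length_cons, List.length_nil]
      omega
    · obtain ⟨b, hb⟩ := h
      subst hb
      have h1 := lcp_snoc_ge m s b
      have h2 := lcp_snoc_le m s b
      have h3 := lcp_le_left m s
      have h4 := lcp_le_right m s
      have h6 : s.length + 1 = r := by simpa using hl'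
      rw [hm] at h3
      simp only [pot]
      omega
  · exact absurd h (by simp [gluedAdj])

lemma pot_le_of_adj {m : List (Fin 2)} (hm : m.length = r) {x y : gluedVert r 2 2}
    (h : (gluedTree r 2 2).Adj x y) : pot m y ≤ pot m x + 1 := by
  rw [adj_iff] at h
  rcases h.2 with h' | h'
  · exact (pot_step hm h').1
  · exact (pot_step hm h').2

lemma pot_le_length {m : List (Fin 2)} (hm : m.length = r) {x y : gluedVert r 2 2}
    (p : (gluedTree r 2 2).Walk x y) : pot m y ≤ pot m x + p.length := by
  induction p with
  | nil => simp
  | cons hadj p ih =>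
    have := pot_le_of_adj hm hadj
    simp only [Walk.length_cons]
    omega

lemma inl_ext {i : Fin 2} {a b : List (Fin 2)} {ha hb} (h : a = b) :
    (Sum.inl (i, ⟨a, ha⟩) : gluedVert r 2 2) = Sum.inl (i, ⟨b, hb⟩) := by subst h; rfl

lemma inr_ext {a b : List (Fin 2)} {ha hb} (h : a = b) :
    (Sum.inr ⟨a, ha⟩ : gluedVert r 2 2) = Sum.inr ⟨b, hb⟩ := by subst h; rfl

lemma drop_ne_nil {a m : List (Fin 2)} (hm : m.length = r) (h : lcp a m < r) :
    m.drop (lcp a m) ≠ [] := by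
  intro he
  have := congrArg List.length he
  simp [hm] at this
  omega

lemma exWalkLI (m : List (Fin 2)) (hm : m.length = r) (i : Fin 2) (s : List (Fin 2))
    (hs : s.length < r) :
    ∃ p : (gluedTree r 2 2).Walk (Sum.inr ⟨m, hm⟩) (Sum.inl (i, ⟨s, hs⟩)),
      p.length = (r - lcp m s) + (s.length - lcp m s) := by
  set c := lcp m s with hc
  have hcs : c ≤ s.length := lcp_le_right m s
  have hcm : c ≤ m.length := lcp_le_left m s
  have h1 : (m.take c ++ m.drop c).length = r := by simp [hm]
  have hd : m.drop c ≠ [] := by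
    rw [hc, lcp_comm]; exact drop_ne_nil hm (by rw [lcp_comm]; omega)
  have h2 : (s.take c ++ s.drop c).length < r := by simp; omega
  refine ⟨((downL i (m.take c) (m.drop c) h1 hd).reverse.copy (inr_ext (List.take_append_drop c m)) rfl).append
    (((downI i (s.take c) (s.drop c) h2).copy (inl_ext ((take_lcp_eq m s).symm)) (inl_ext (List.take_append_drop c s)))), ?_⟩
  simp [Walk.length_append, Walk.length_copy, Walk.length_reverse, length_downL, length_downI, hm]
  try omega

lemma exWalkLL (m : List (Fin 2)) (hm : m.length = r) (l : List (Fin 2)) (hl : l.length = r)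
    (i : Fin 2) (hne : m ≠ l) :
    ∃ p : (gluedTree r 2 2).Walk (Sum.inr ⟨m, hm⟩) (Sum.inr ⟨l, hl⟩),
      p.length = (r - lcp m l) + (r - lcp m l) ∧
      ∀ (j : ℕ) (hj : min j l.length < r), lcp m l ≤ j → nd i l j hj ∈ p.support := by
  set c := lcp m l with hc
  have hcm : c ≤ m.length := lcp_le_left m l
  have hcl : c ≤ l.length := lcp_le_right m l
  have hcr : c < r := by
    rcases Nat.lt_or_ge c r with h | h
    · exact h
    · exfalso
      have : c = m.length := by omega
      have hpre : m <+: l := lcp_eq_left_iff_prefix.mp (by omega)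
      exact hne (hpre.eq_of_length (by omega))
  have h1 : (m.take c ++ m.drop c).length = r := by simp [hm]
  have hd : m.drop c ≠ [] := by rw [hc, lcp_comm]; exact drop_ne_nil hm (by rw [lcp_comm]; omega)
  have h2 : (l.take c ++ l.drop c).length = r := by simp [hl]
  have hd2 : l.drop c ≠ [] := drop_ne_nil hl (by omega)
  refine ⟨((downL i (m.take c) (m.drop c) h1 hd).reverse.copy (inr_ext (List.take_append_drop c m)) rfl).append
    (((downL i (l.take c) (l.drop c) h2 hd2).copy (inl_ext (by rw [← take_lcp_eq])) (inr_ext (List.take_append_drop c l)))), ?_, ?_⟩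
  · simp [Walk.length_append, Walk.length_copy, Walk.length_reverse, length_downL, hm, hl]
    try omega
  · intro j hj hcj
    rw [Walk.mem_support_append_iff]
    right
    rw [Walk.support_copy]
    have hjt : (l.take c).length ≤ j := by simp; omega
    have hmin : min j (l.take c ++ l.drop c).length < r := by
      simp only [List.take_append_drop]; exact hj
    have := mem_support_downL i (l.take c) (l.drop c) h2 hd2 j hjt hmin
    convert this using 1
    exact nd_congr (by rw [List.take_append_drop])

lemma exWalkIL (i : Fin 2) (a : List (Fin 2)) (ha : a.length < r) (l : List (Fin 2))
    (hl : l.length = r) (hcal : lcp a l ≤ a.length) :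
    ∃ p : (gluedTree r 2 2).Walk (Sum.inl (i, ⟨a, ha⟩)) (Sum.inr ⟨l, hl⟩),
      p.length = (a.length - lcp a l) + (r - lcp a l) ∧
      ∀ (j : ℕ) (hj : min j l.length < r), lcp a l ≤ j → nd i l j hj ∈ p.support := by
  set c := lcp a l with hc
  have hcl : c ≤ l.length := lcp_le_right a l
  have hcr : c < r := by omega
  have h1 : (a.take c ++ a.drop c).length < r := by simp; omega
  have h2 : (l.take c ++ l.drop c).length = r := by simp [hl]
  have hd2 : l.drop c ≠ [] := drop_ne_nil hl (by omega)
  refine ⟨((downI i (a.take c) (a.drop c) h1).reverse.copy (inl_ext (List.take_append_drop c a)) rfl).append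
    (((downL i (l.take c) (l.drop c) h2 hd2).copy (inl_ext (by rw [← take_lcp_eq])) (inr_ext (List.take_append_drop c l)))), ?_, ?_⟩
  · simp [Walk.length_append, Walk.length_copy, Walk.length_reverse, length_downL, length_downI, hl]
    try omega
  · intro j hj hcj
    rw [Walk.mem_support_append_iff]
    right
    rw [Walk.support_copy]
    have hjt : (l.take c).length ≤ j := by simp; omega
    have hmin : min j (l.take c ++ l.drop c).length < r := by
      simp only [List.take_append_drop]; exact hj
    have := mem_support_downL i (l.take c) (l.drop c) h2 hd2 j hjt hmin
    convert this using 1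
    exact nd_congr (by rw [List.take_append_drop])

lemma pot_leaf_self (m : List (Fin 2)) (hm : m.length = r) :
    pot (r := r) m (Sum.inr ⟨m, hm⟩) = 0 := by
  simp [pot, lcp_self, hm]

lemma dist_leaf (m : List (Fin 2)) (hm : m.length = r) (x : gluedVert r 2 2) :
    (gluedTree r 2 2).dist (Sum.inr ⟨m, hm⟩) x = pot m x := by
  have lower : ∀ p : (gluedTree r 2 2).Walk (Sum.inr ⟨m, hm⟩) x,
      pot m x ≤ (gluedTree r 2 2).dist (Sum.inr ⟨m, hm⟩) x := by
    intro p
    obtain ⟨q, hq⟩ := p.reachable.exists_walk_length_eq_dist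
    have := pot_le_length hm q
    rw [pot_leaf_self] at this
    omega
  rcases x with ⟨i, s, hs⟩ | ⟨l, hl⟩
  · obtain ⟨p, hp⟩ := exWalkLI m hm i s hs
    have h1 := SimpleGraph.dist_le p
    have h2 := lower p
    simp only [pot] at h2 ⊢
    omega
  · by_cases he : m = l
    · subst he
      rw [pot_leaf_self m hm]
      exact SimpleGraph.dist_self
    · obtain ⟨p, hp, -⟩ := exWalkLL m hm l hl 0 he
      have h1 := SimpleGraph.dist_le p
      have h2 := lower p
      simp only [pot] at h2 ⊢
      omega

lemma connected (hr : 0 < r) : (gluedTree r 2 2).Connected := by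
  have hm0 : (List.replicate r (0 : Fin 2)).length = r := by simp
  set m0 : gluedVert r 2 2 := Sum.inr ⟨List.replicate r 0, hm0⟩ with hm0d
  have reach : ∀ x : gluedVert r 2 2, (gluedTree r 2 2).Reachable m0 x := by
    intro x
    rcases x with ⟨i, s, hs⟩ | ⟨l, hl⟩
    · obtain ⟨p, -⟩ := exWalkLI (List.replicate r 0) hm0 i s hs
      exact p.reachable
    · by_cases he : List.replicate r (0 : Fin 2) = l
      · subst he; exact SimpleGraph.Reachable.refl _
      · obtain ⟨p, -, -⟩ := exWalkLL (List.replicate r 0) hm0 l hl 0 he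
        exact p.reachable
  have : Nonempty (gluedVert r 2 2) := ⟨m0⟩
  exact ⟨fun x y => (reach x).symm.trans (reach y)⟩

lemma dist_add_of_mem_support (hr : 0 < r) {u v w : gluedVert r 2 2}
    (p : (gluedTree r 2 2).Walk u v) (hlen : p.length = (gluedTree r 2 2).dist u v)
    (hw : w ∈ p.support) :
    (gluedTree r 2 2).dist u w + (gluedTree r 2 2).dist w v = (gluedTree r 2 2).dist u v := by
  have hc := connected hr
  have h1 := SimpleGraph.dist_le (p.takeUntil w hw)
  have h2 := SimpleGraph.dist_le (p.dropUntil w hw)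
  have h3 : (p.takeUntil w hw).length + (p.dropUntil w hw).length = p.length := by
    have := congrArg Walk.length (p.take_spec hw)
    rwa [Walk.length_append] at this
  have h4 := hc.dist_triangle (u := u) (v := w) (w := v)
  omega

lemma eq_of_lcp_full {a b : List (Fin 2)} (h : lcp a b = a.length) (hl : a.length = b.length) :
    a = b :=
  (lcp_eq_left_iff_prefix.mp h).eq_of_length hl

lemma key1 {l1 l3 l2 : List (Fin 2)} (h1 : l1.length = r) (h3 : l3.length = r)
    (h2 : l2.length = r)
    (he : ((r - lcp l1 l3) + (r - lcp l1 l3)) + ((r - lcp l3 l2) + (r - lcp l3 l2))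
      = (r - lcp l1 l2) + (r - lcp l1 l2)) : l3 = l1 ∨ l3 = l2 := by
  have ha : lcp l1 l3 ≤ r := by have := lcp_le_left l1 l3; omega
  have hb : lcp l3 l2 ≤ r := by have := lcp_le_left l3 l2; omega
  have hcc : lcp l1 l2 ≤ r := by have := lcp_le_left l1 l2; omega
  have hm := min_lcp_le l1 l3 l2
  have : lcp l1 l3 = r ∨ lcp l3 l2 = r := by omega
  rcases this with h | h
  · left
    exact eq_of_lcp_full (a := l3) (b := l1) (by rw [lcp_comm l3 l1]; omega) (by omega)
  · right
    exact eq_of_lcp_full (by omega) (by omega)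

lemma key2 {l1 l3 s : List (Fin 2)} (h1 : l1.length = r) (h3 : l3.length = r)
    (hs : s.length < r)
    (he : ((r - lcp l1 l3) + (r - lcp l1 l3)) + ((r - lcp l3 s) + (s.length - lcp l3 s))
      = (r - lcp l1 s) + (s.length - lcp l1 s)) : l3 = l1 := by
  have ha : lcp l1 l3 ≤ r := by have := lcp_le_left l1 l3; omega
  have hb : lcp l3 s ≤ s.length := lcp_le_right l3 s
  have hcc : lcp l1 s ≤ s.length := lcp_le_right l1 s
  have hm := min_lcp_le l1 l3 s
  have : lcp l1 l3 = r := by omega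
  exact eq_of_lcp_full (a := l3) (b := l1) (by rw [lcp_comm l3 l1]; omega) (by omega)

theorem quasiLeaves_isOuterGPSet (hr : 0 < r) :
    isOuterGPSet (gluedTree r 2 2) (quasiLeaves r 2 2) := by
  constructor
  · rintro u ⟨⟨l1, hl1⟩, rfl⟩ v ⟨⟨l2, hl2⟩, rfl⟩
    intro p hp hlen w hw hwS
    obtain ⟨⟨l3, hl3⟩, rfl⟩ := hwS
    have hsplit := dist_add_of_mem_support hr p hlen hw
    rw [dist_leaf l1 hl1 (Sum.inr ⟨l3, hl3⟩), dist_leaf l3 hl3 (Sum.inr ⟨l2, hl2⟩),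
      dist_leaf l1 hl1 (Sum.inr ⟨l2, hl2⟩)] at hsplit
    simp only [pot] at hsplit
    rcases key1 hl1 hl3 hl2 hsplit with h | h
    · left; exact inr_ext h
    · right; exact inr_ext h
  · rintro u ⟨⟨l1, hl1⟩, rfl⟩ v hv
    intro p hp hlen w hw hwS
    obtain ⟨⟨l3, hl3⟩, rfl⟩ := hwS
    rcases v with ⟨j, s, hs⟩ | l
    · have hsplit := dist_add_of_mem_support hr p hlen hw
      rw [dist_leaf l1 hl1 (Sum.inr ⟨l3, hl3⟩), dist_leaf l3 hl3 (Sum.inl (j, ⟨s, hs⟩)),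
        dist_leaf l1 hl1 (Sum.inl (j, ⟨s, hs⟩))] at hsplit
      simp only [pot] at hsplit
      left
      exact inr_ext (key2 hl1 hl3 hs hsplit)
    · exact absurd ⟨l, rfl⟩ hv

lemma fin2_ne (x : Fin 2) : x ≠ 1 - x := by revert x; decide

lemma prefix_take {s l : List (Fin 2)} (h : s <+: l) : l.take s.length = s :=
  (List.prefix_iff_eq_take.mp h).symm

/-- Divergence at position `k`. -/
lemma lcp_branch {a : List (Fin 2)} {k : ℕ} (hk : k < a.length) (z : List (Fin 2)) (x : Fin 2)
    (hx : x ≠ a[k]) : lcp a (a.take k ++ [x] ++ z) = k := by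
  have htk : (a.take k).length = k := by simp; omega
  apply lcp_eq_of_take k _ _ (by omega) (by simp; omega)
  · rw [List.append_assoc, List.take_left' htk]
  · left
    rw [List.append_assoc, List.take_succ]
    have : (a.take k ++ ([x] ++ z)).take (k + 1) = a.take k ++ ([x] ++ z).take 1 := by
      have := List.take_length_add_append (l₁ := a.take k) (l₂ := [x] ++ z) 1
      rwa [htk] at this
    rw [this]
    simp only [List.take_cons, List.take_nil, List.getElem?_eq_getElem hk]
    intro hcon
    have := List.append_cancel_left hcon
    simp at this
    exact hx this.symm

/-- From a violating shortest path, contradict outer general position. -/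
lemma violate (hr : 0 < r) {S : Set (gluedVert r 2 2)}
    (hS : isOuterGPSet (gluedTree r 2 2) S) {u v w : gluedVert r 2 2} (hu : u ∈ S) (hw : w ∈ S)
    (p : (gluedTree r 2 2).Walk u v) (hlen : p.length = (gluedTree r 2 2).dist u v)
    (hmem : w ∈ p.support) (hwu : w ≠ u) (hwv : w ≠ v) : False := by
  have hp := p.isPath_of_length_eq_dist hlen
  by_cases hv : v ∈ S
  · rcases hS.1 u hu v hv p hp hlen w hmem hw with h | h
    · exact hwu h
    · exact hwv h
  · rcases hS.2 u hu v hv p hp hlen w hmem hw with h | h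
    · exact hwu h
    · exact hwv h

/-- An internal vertex and a quasi-leaf cannot both lie in an outer GP set. -/
lemma no_internal_and_leaf (hr : 0 < r) {S : Set (gluedVert r 2 2)}
    (hS : isOuterGPSet (gluedTree r 2 2) S) {i : Fin 2} {s : List (Fin 2)} {hs : s.length < r}
    (hin : Sum.inl (i, ⟨s, hs⟩) ∈ S) {l : List (Fin 2)} {hl : l.length = r}
    (hleaf : Sum.inr ⟨l, hl⟩ ∈ S) : False := by
  by_cases hpre : s <+: l
  · -- `s` is a prefix of `l`
    have hsl : s.length < l.length := by omega
    set x : Fin 2 := 1 - l[s.length] with hx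
    set v : List (Fin 2) := l.take s.length ++ [x] ++ List.replicate (r - s.length - 1) 0 with hv
    have hvlen : v.length = r := by simp [hv]; omega
    have hc : lcp l v = s.length := lcp_branch hsl _ x (fin2_ne _).symm
    have hne : l ≠ v := by
      intro he
      have hself := lcp_self l
      rw [← he] at hc
      omega
    obtain ⟨p, hplen, hsup⟩ := exWalkLL l hl v hvlen i hne
    have hdist : (gluedTree r 2 2).dist (Sum.inr ⟨l, hl⟩) (Sum.inr ⟨v, hvlen⟩)
        = (r - lcp l v) + (r - lcp l v) := by
      rw [dist_leaf]; simp only [pot]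
    have hj : min s.length v.length < r := by rw [hvlen]; omega
    have hmem := hsup s.length hj (by omega)
    have htk : (l.take s.length).length = s.length := by simp; omega
    have hndeq : nd i v s.length hj = Sum.inl (i, ⟨s, hs⟩) := by
      apply inl_ext
      rw [hv, List.append_assoc, List.take_left' htk, prefix_take hpre]
    rw [hndeq] at hmem
    exact violate hr hS hleaf hin p (hplen.trans hdist.symm) hmem (by simp) (by simp)
  · -- `s` is not a prefix of `l`
    have hlcp_lt : lcp l s < s.length := by
      rcases lt_or_eq_of_le (lcp_le_right l s) with h | h
      · exact h
      · exact absurd (lcp_eq_left_iff_prefix.mp (by rw [lcp_comm]; exact h)) hpre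
    set v : List (Fin 2) := s ++ List.replicate (r - s.length) 0 with hv
    have hvlen : v.length = r := by simp [hv]; omega
    have hc : lcp l v = lcp l s := lcp_append_eq l s _ hlcp_lt
    have hne : l ≠ v := by
      intro he
      have hself := lcp_self l
      rw [← he] at hc
      omega
    obtain ⟨p, hplen, hsup⟩ := exWalkLL l hl v hvlen i hne
    have hdist : (gluedTree r 2 2).dist (Sum.inr ⟨l, hl⟩) (Sum.inr ⟨v, hvlen⟩)
        = (r - lcp l v) + (r - lcp l v) := by
      rw [dist_leaf]; simp only [pot]
    have hj : min s.length v.length < r := by rw [hvlen]; omega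
    have hmem := hsup s.length hj (by omega)
    have hndeq : nd i v s.length hj = Sum.inl (i, ⟨s, hs⟩) := by
      apply inl_ext
      rw [hv, List.take_left' rfl]
    rw [hndeq] at hmem
    exact violate hr hS hleaf hin p (hplen.trans hdist.symm) hmem (by simp) (by simp)

/-- Two comparable internal vertices in the same copy cannot both lie in an outer GP set. -/
lemma no_two_internal_prefix (hr : 0 < r) {S : Set (gluedVert r 2 2)}
    (hS : isOuterGPSet (gluedTree r 2 2) S) {i : Fin 2} {s s' : List (Fin 2)}
    {hs : s.length < r} {hs' : s'.length < r} (h1 : Sum.inl (i, ⟨s, hs⟩) ∈ S)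
    (h2 : Sum.inl (i, ⟨s', hs'⟩) ∈ S) (hpre : s <+: s') (hne : s ≠ s') : False := by
  have hsl : s.length < s'.length := by
    rcases lt_or_eq_of_le hpre.length_le with h | h
    · exact h
    · exact absurd (hpre.eq_of_length h) hne
  set x : Fin 2 := 1 - s'[s.length] with hx
  set v : List (Fin 2) := s'.take s.length ++ [x] ++ List.replicate (r - s.length - 1) 0 with hv
  have hvlen : v.length = r := by simp [hv]; omega
  have hc : lcp s' v = s.length := lcp_branch hsl _ x (fin2_ne _).symm
  obtain ⟨p, hplen, hsup⟩ := exWalkIL i s' hs' v hvlen (by omega)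
  have hdist : (gluedTree r 2 2).dist (Sum.inl (i, ⟨s', hs'⟩)) (Sum.inr ⟨v, hvlen⟩)
      = (s'.length - lcp s' v) + (r - lcp s' v) := by
    rw [SimpleGraph.dist_comm, dist_leaf]
    simp only [pot]
    rw [lcp_comm]
    omega
  have hj : min s.length v.length < r := by rw [hvlen]; omega
  have hmem := hsup s.length hj (by omega)
  have htk : (s'.take s.length).length = s.length := by simp; omega
  have hndeq : nd i v s.length hj = Sum.inl (i, ⟨s, hs⟩) := by
    apply inl_ext
    rw [hv, List.append_assoc, List.take_left' htk, prefix_take hpre]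
  rw [hndeq] at hmem
  exact violate hr hS h2 h1 p (hplen.trans hdist.symm) hmem
    (by simp [Subtype.mk.injEq]; intro h; exact hne h) (by simp)

/-- Two distinct internal vertices in the same copy cannot both lie in an outer GP set. -/
lemma no_two_internal (hr : 0 < r) {S : Set (gluedVert r 2 2)}
    (hS : isOuterGPSet (gluedTree r 2 2) S) {i : Fin 2} {s s' : List (Fin 2)}
    {hs : s.length < r} {hs' : s'.length < r} (h1 : Sum.inl (i, ⟨s, hs⟩) ∈ S)
    (h2 : Sum.inl (i, ⟨s', hs'⟩) ∈ S) (hne : s ≠ s') : False := by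
  by_cases hp1 : s <+: s'
  · exact no_two_internal_prefix hr hS h1 h2 hp1 hne
  by_cases hp2 : s' <+: s
  · exact no_two_internal_prefix hr hS h2 h1 hp2 (Ne.symm hne)
  -- incomparable case
  have hlt1 : lcp s s' < s.length := by
    rcases lt_or_eq_of_le (lcp_le_left s s') with h | h
    · exact h
    · exact absurd (lcp_eq_left_iff_prefix.mp h) hp1
  have hlt2 : lcp s s' < s'.length := by
    rcases lt_or_eq_of_le (lcp_le_right s s') with h | h
    · exact h
    · exact absurd (lcp_eq_left_iff_prefix.mp (by rw [lcp_comm]; exact h)) hp2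
  set v : List (Fin 2) := s' ++ List.replicate (r - s'.length) 0 with hv
  have hvlen : v.length = r := by simp [hv]; omega
  have hc : lcp s v = lcp s s' := lcp_append_eq s s' _ hlt2
  obtain ⟨p, hplen, hsup⟩ := exWalkIL i s hs v hvlen (by omega)
  have hdist : (gluedTree r 2 2).dist (Sum.inl (i, ⟨s, hs⟩)) (Sum.inr ⟨v, hvlen⟩)
      = (s.length - lcp s v) + (r - lcp s v) := by
    rw [SimpleGraph.dist_comm, dist_leaf]
    simp only [pot]
    rw [lcp_comm]
    omega
  have hj : min s'.length v.length < r := by rw [hvlen]; omega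
  have hmem := hsup s'.length hj (by omega)
  have hndeq : nd i v s'.length hj = Sum.inl (i, ⟨s', hs'⟩) := by
    apply inl_ext
    rw [hv, List.take_left' rfl]
  rw [hndeq] at hmem
  exact violate hr hS h1 h2 p (hplen.trans hdist.symm) hmem
    (by simp [Subtype.mk.injEq]; intro h; exact hne h.symm) (by simp)

noncomputable instance : Fintype {l : List (Fin 2) // l.length = r} :=
  Fintype.ofEquiv (List.Vector (Fin 2) r) (Equiv.refl _)

lemma ncard_quasiLeaves : (quasiLeaves r 2 2).ncard = 2 ^ r := by
  have h1 : quasiLeaves r 2 2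
      = Set.range (Sum.inr : {l : List (Fin 2) // l.length = r} → gluedVert r 2 2) := by
    ext x
    simp [quasiLeaves, Set.mem_range, eq_comm]
  rw [h1, ← Nat.card_coe_set_eq, Nat.card_range_of_injective Sum.inr_injective]
  have e : List.Vector (Fin 2) r ≃ {l : List (Fin 2) // l.length = r} := Equiv.refl _
  rw [← Nat.card_congr e, Nat.card_eq_fintype_card]
  simp

lemma quasiLeaves_finite : (quasiLeaves r 2 2).Finite := by
  have h1 : quasiLeaves r 2 2
      = Set.range (Sum.inr : {l : List (Fin 2) // l.length = r} → gluedVert r 2 2) := by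
    ext x
    simp [quasiLeaves, Set.mem_range, eq_comm]
  rw [h1]
  exact Set.finite_range _

lemma main_count (hr : 2 ≤ r) {S : Set (gluedVert r 2 2)}
    (hS : isOuterGPSet (gluedTree r 2 2) S) :
    S.ncard ≤ 2 ^ r ∧ (S.ncard = 2 ^ r → S = quasiLeaves r 2 2) := by
  have hr0 : 0 < r := by omega
  by_cases hL : ∃ l : {l : List (Fin 2) // l.length = r}, Sum.inr l ∈ S
  · -- `S` consists of quasi-leaves only
    have hsub : S ⊆ quasiLeaves r 2 2 := by
      intro x hx
      rcases x with ⟨i, s, hs⟩ | l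
      · obtain ⟨⟨l, hl⟩, hlS⟩ := hL
        exact absurd (no_internal_and_leaf hr0 hS hx hlS) not_false
      · exact ⟨l, rfl⟩
    constructor
    · rw [← ncard_quasiLeaves]
      exact Set.ncard_le_ncard hsub quasiLeaves_finite
    · intro hcard
      exact Set.eq_of_subset_of_ncard_le hsub (by rw [hcard, ncard_quasiLeaves])
        quasiLeaves_finite
  · -- `S` consists of internal vertices only, at most one per copy
    push_neg at hL
    have hle2 : S.ncard ≤ 2 := by
      have := Set.ncard_le_ncard_of_injOn (s := S) (t := (Set.univ : Set (Fin 2)))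
        (Sum.elim (fun p => p.1) (fun _ => 0) : gluedVert r 2 2 → Fin 2)
        (fun x _ => Set.mem_univ _) ?_ (Set.finite_univ)
      · rwa [Set.ncard_univ, Nat.card_eq_fintype_card, Fintype.card_fin] at this
      · rintro x hx y hy hxy
        rcases x with ⟨i, s, hs⟩ | l
        · rcases y with ⟨i', s', hs'⟩ | l'
          · simp only [Sum.elim_inl] at hxy
            subst hxy
            by_cases hss : s = s'
            · subst hss
              rfl
            · exact absurd (no_two_internal hr0 hS hx hy hss) not_false
          · exact absurd (hL l' hy) not_false
        · exact absurd (hL l hx) not_false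
    have h4 : 4 ≤ 2 ^ r := by
      calc (4:ℕ) = 2 ^ 2 := by norm_num
      _ ≤ 2 ^ r := Nat.pow_le_pow_right (by norm_num) hr
    exact ⟨by omega, by omega⟩

end GT

theorem stmt12 (r : ℕ) (hr : 2 ≤ r) :
    IsGreatest {k : ℕ | ∃ S : Set (gluedVert r 2 2),
      isOuterGPSet (gluedTree r 2 2) S ∧ S.ncard = k} (2 ^ r) ∧
    ∀ S : Set (gluedVert r 2 2),
      isOuterGPSet (gluedTree r 2 2) S → S.ncard = 2 ^ r → S = quasiLeaves r 2 2 := by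
  have hr0 : 0 < r := by omega
  refine ⟨⟨⟨quasiLeaves r 2 2, GT.quasiLeaves_isOuterGPSet hr0, GT.ncard_quasiLeaves⟩, ?_⟩, ?_⟩
  · rintro k ⟨S, hS, rfl⟩
    exact (GT.main_count hr hS).1
  · intro S hS hcard
    exact (GT.main_count hr hS).2 hcard
end

section
/- For r ≥ 2, the total general position number and the dual general position number of GT(r) are both 0; i.e., the only total (resp. dual) general position set of GT(r) is the empty set. -/
open SimpleGraph

/-! ### Auxiliary machinery -/

/-- If `x ∈ S` is the midpoint of a shortest `a,c`-path (with `a,c` nonadjacent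
neighbours of `x`), then `a` and `c` are not `S`-positionable. -/
lemma midPath {V : Type*} {G : SimpleGraph V} {S : Set V} {x a c : V}
    (hxa : G.Adj a x) (hxc : G.Adj x c) (hac : ¬ G.Adj a c) (hane : a ≠ c)
    (hx : x ∈ S) (hpos : isPositionable G S a c) : False := by
  have hax : a ≠ x := hxa.ne
  have hxcne : x ≠ c := hxc.ne
  let p : G.Walk a c := Walk.cons hxa (Walk.cons hxc Walk.nil)
  have hsupp : p.support = [a, x, c] := rfl
  have hpath : p.IsPath := by
    rw [Walk.isPath_def, hsupp]
    simp [hax, hane, hxcne]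
  have hd : G.dist a c = 2 := by
    have h1 : G.dist a c ≤ 2 := SimpleGraph.dist_le p
    have hr : G.Reachable a c := ⟨p⟩
    have h0 : 0 < G.dist a c := hr.pos_dist_of_ne hane
    have h1' : G.dist a c ≠ 1 := fun h => hac (SimpleGraph.dist_eq_one_iff_adj.mp h)
    omega
  have := hpos p hpath (by rw [hd]; rfl) x (by rw [hsupp]; simp) hx
  rcases this with h | h
  · exact hax h.symm
  · exact hxcne h

lemma dualOne {V : Type*} {G : SimpleGraph V} {S : Set V} {x a c : V}
    (hxa : G.Adj a x) (hxc : G.Adj x c) (hac : ¬ G.Adj a c) (hane : a ≠ c)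
    (hx : x ∈ S) (hS : isDualGPSet G S) : (a ∈ S ↔ c ∉ S) := by
  constructor
  · intro ha hc
    exact midPath hxa hxc hac hane hx (hS.1 a ha c hc)
  · intro hc
    by_contra ha
    exact midPath hxa hxc hac hane hx (hS.2 a ha c hc)

/-- The list underlying a vertex of the glued tree. -/
def glist {r n t : ℕ} : gluedVert r n t → List (Fin t)
  | Sum.inl (_, s) => s.val
  | Sum.inr l => l.val

lemma glued_adj_iff (r n t : ℕ) (x y : gluedVert r n t) :
    (gluedTree r n t).Adj x y ↔ x ≠ y ∧ (gluedAdj r n t x y ∨ gluedAdj r n t y x) :=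
  SimpleGraph.fromRel_adj _ _ _

lemma gluedAdj_glist {r n t : ℕ} {x y : gluedVert r n t} (h : gluedAdj r n t x y) :
    ∃ b, glist y = glist x ++ [b] := by
  match x, y with
  | Sum.inl (i, s), Sum.inl (j, s') =>
    obtain ⟨-, b, hb⟩ := h
    exact ⟨b, hb⟩
  | Sum.inl (i, s), Sum.inr l =>
    obtain ⟨b, hb⟩ := h
    exact ⟨b, hb⟩
  | Sum.inr l, _ => exact h.elim

lemma not_adj_of_length {r n t : ℕ} {x y : gluedVert r n t}
    (h1 : (glist y).length ≠ (glist x).length + 1)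
    (h2 : (glist x).length ≠ (glist y).length + 1) :
    ¬ (gluedTree r n t).Adj x y := by
  rw [glued_adj_iff]
  rintro ⟨-, h | h⟩
  · obtain ⟨b, hb⟩ := gluedAdj_glist h
    exact h1 (by simp [hb])
  · obtain ⟨b, hb⟩ := gluedAdj_glist h
    exact h2 (by simp [hb])

lemma ne_of_glist {r n t : ℕ} {x y : gluedVert r n t}
    (h : glist x ≠ glist y) : x ≠ y := fun he => h (he ▸ rfl)

lemma adj_inl_inl {r n t : ℕ} {i : Fin n} {s s' : {l : List (Fin t) // l.length < r}}
    (b : Fin t) (hb : s'.val = s.val ++ [b]) :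
    (gluedTree r n t).Adj (Sum.inl (i, s)) (Sum.inl (i, s')) := by
  rw [glued_adj_iff]
  refine ⟨fun h => ?_, Or.inl ⟨rfl, b, hb⟩⟩
  have : s = s' := by
    injection h with h'
    exact congrArg Prod.snd h'
  rw [← this] at hb
  simpa using congrArg List.length hb

lemma adj_inl_inr {r n t : ℕ} {i : Fin n} {s : {l : List (Fin t) // l.length < r}}
    {l : {l : List (Fin t) // l.length = r}}
    (b : Fin t) (hb : l.val = s.val ++ [b]) :
    (gluedTree r n t).Adj (Sum.inl (i, s)) (Sum.inr l) := by
  rw [glued_adj_iff]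
  exact ⟨fun h => Sum.inl_ne_inr h, Or.inl ⟨b, hb⟩⟩

lemma exists_child {r n t : ℕ} (i : Fin n) (s : {l : List (Fin t) // l.length < r}) (b : Fin t) :
    ∃ y : gluedVert r n t, (gluedTree r n t).Adj (Sum.inl (i, s)) y ∧
      glist y = s.val ++ [b] := by
  rcases lt_or_eq_of_le (Nat.succ_le_of_lt s.2) with h | h
  · exact ⟨Sum.inl (i, ⟨s.val ++ [b], by simpa using h⟩), adj_inl_inl b rfl, rfl⟩
  · exact ⟨Sum.inr ⟨s.val ++ [b], by simpa using h⟩, adj_inl_inr b rfl, rfl⟩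

/-- Step B: no internal non-root vertex can be in a dual GP set. -/
lemma no_internal {r : ℕ} {S : Set (gluedVert r 2 2)}
    (hS : isDualGPSet (gluedTree r 2 2) S) (i : Fin 2)
    (s : {l : List (Fin 2) // l.length < r}) (hne : s.val ≠ [])
    (hmem : Sum.inl (i, s) ∈ S) : False := by
  set b : gluedVert r 2 2 := Sum.inl (i, s) with hbdef
  obtain ⟨a2, ha2, hl2⟩ := exists_child i s 0
  obtain ⟨a3, ha3, hl3⟩ := exists_child i s 1
  have hlen : 1 ≤ s.val.length := by
    cases h : s.val with
    | nil => exact absurd h hne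
    | cons x xs => simp [h]
  have hdl : s.val.dropLast.length = s.val.length - 1 := by simp
  set a1 : gluedVert r 2 2 :=
    Sum.inl (i, ⟨s.val.dropLast, by rw [hdl]; omega⟩) with ha1def
  have ha1 : (gluedTree r 2 2).Adj a1 b :=
    adj_inl_inl (s.val.getLast hne) (List.dropLast_append_getLast hne).symm
  have hg1 : glist a1 = s.val.dropLast := rfl
  have hgb : glist b = s.val := rfl
  have hlen2 : (glist a2).length = s.val.length + 1 := by simp [hl2]
  have hlen3 : (glist a3).length = s.val.length + 1 := by simp [hl3]
  have hlen1 : (glist a1).length = s.val.length - 1 := by rw [hg1, hdl]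
  -- non-adjacency and distinctness
  have hna12 : ¬ (gluedTree r 2 2).Adj a1 a2 := not_adj_of_length (by omega) (by omega)
  have hna13 : ¬ (gluedTree r 2 2).Adj a1 a3 := not_adj_of_length (by omega) (by omega)
  have hna23 : ¬ (gluedTree r 2 2).Adj a2 a3 := not_adj_of_length (by omega) (by omega)
  have hne12 : a1 ≠ a2 := ne_of_glist (fun h => by
    have := congrArg List.length h; omega)
  have hne13 : a1 ≠ a3 := ne_of_glist (fun h => by
    have := congrArg List.length h; omega)
  have hne23 : a2 ≠ a3 := ne_of_glist (by
    rw [hl2, hl3]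
    intro h
    have : (0 : Fin 2) = 1 := by simpa using h
    simp at this)
  have h12 := dualOne ha1 ha2 hna12 hne12 hmem hS
  have h13 := dualOne ha1 ha3 hna13 hne13 hmem hS
  have h23 := dualOne ha2.symm ha3 hna23 hne23 hmem hS
  tauto

/-- A dual GP set in the glued binary tree (r ≥ 2) is empty. -/
lemma dual_empty (r : ℕ) (hr : 2 ≤ r) (S : Set (gluedVert r 2 2))
    (hS : isDualGPSet (gluedTree r 2 2) S) : S = ∅ := by
  by_contra h
  obtain ⟨x, hx⟩ := Set.nonempty_iff_ne_empty.mpr h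
  -- Step A: produce a non-root internal vertex in S, then contradict.
  match x with
  | Sum.inl (i, s) =>
    by_cases hne : s.val = []
    · -- root: one of its two children is in S
      have hlt : ([ (0:Fin 2) ]).length < r := by simp; omega
      have hlt' : ([ (1:Fin 2) ]).length < r := by simp; omega
      set c0 : gluedVert r 2 2 := Sum.inl (i, ⟨[0], hlt⟩) with hc0
      set c1 : gluedVert r 2 2 := Sum.inl (i, ⟨[1], hlt'⟩) with hc1
      have hadj0 : (gluedTree r 2 2).Adj (Sum.inl (i, s)) c0 :=
        adj_inl_inl 0 (by simp [hne])
      have hadj1 : (gluedTree r 2 2).Adj (Sum.inl (i, s)) c1 :=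
        adj_inl_inl 1 (by simp [hne])
      have hna : ¬ (gluedTree r 2 2).Adj c0 c1 :=
        not_adj_of_length (by simp [glist, hc0, hc1]) (by simp [glist, hc0, hc1])
      have hnec : c0 ≠ c1 := ne_of_glist (by
        simp only [hc0, hc1, glist]
        intro h
        have : (0 : Fin 2) = 1 := by simpa using h
        simp at this)
      have hiff := dualOne hadj0.symm hadj1 hna hnec hx hS
      by_cases h0 : c0 ∈ S
      · exact no_internal hS i ⟨[0], hlt⟩ (by simp) h0
      · exact no_internal hS i ⟨[1], hlt'⟩ (by simp) (by tauto)
    · exact no_internal hS i s hne hx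
  | Sum.inr l =>
    -- quasi-leaf: one of its two parents is in S
    have hlnil : l.val ≠ [] := by
      intro h
      have := l.2
      rw [h] at this
      simp at this
      omega
    have hdl : l.val.dropLast.length = r - 1 := by
      have := l.2
      simp [this]
    have hltd : l.val.dropLast.length < r := by omega
    set p0 : gluedVert r 2 2 := Sum.inl (0, ⟨l.val.dropLast, hltd⟩) with hp0
    set p1 : gluedVert r 2 2 := Sum.inl (1, ⟨l.val.dropLast, hltd⟩) with hp1
    have hb : l.val = l.val.dropLast ++ [l.val.getLast hlnil] :=
      (List.dropLast_append_getLast hlnil).symm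
    have hadj0 : (gluedTree r 2 2).Adj p0 (Sum.inr l) := adj_inl_inr _ hb
    have hadj1 : (gluedTree r 2 2).Adj p1 (Sum.inr l) := adj_inl_inr _ hb
    have hna : ¬ (gluedTree r 2 2).Adj p0 p1 :=
      not_adj_of_length (by simp [glist, hp0, hp1]) (by simp [glist, hp0, hp1])
    have hnep : p0 ≠ p1 := by
      intro h
      injection h with h'
      have : (0 : Fin 2) = 1 := congrArg Prod.fst h'
      simp at this
    have hdnil : l.val.dropLast ≠ [] := by
      intro h
      rw [h] at hdl
      simp at hdl
      omega
    have hiff := dualOne hadj0 hadj1.symm hna hnep hx hS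
    by_cases h0 : p0 ∈ S
    · exact no_internal hS 0 ⟨l.val.dropLast, hltd⟩ hdnil h0
    · exact no_internal hS 1 ⟨l.val.dropLast, hltd⟩ hdnil (by tauto)

theorem stmt13 (r : ℕ) (hr : 2 ≤ r) :
    (∀ S : Set (gluedVert r 2 2), isTotalGPSet (gluedTree r 2 2) S → S = ∅) ∧
    (∀ S : Set (gluedVert r 2 2), isDualGPSet (gluedTree r 2 2) S → S = ∅) := by
  constructor
  · intro S hS
    exact dual_empty r hr S ⟨fun u _ v _ => hS u v, fun u _ v _ => hS u v⟩
  · intro S hS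
    exact dual_empty r hr S hS
end

section
/- If G is a connected graph and X ⊆ V(G), then X is a total general position set of G if and only if every vertex of X is simplicial in G. -/
open SimpleGraph

theorem stmt14 {V : Type*} (G : SimpleGraph V) (hG : G.Connected) (X : Set V) :
    isTotalGPSet G X ↔
      ∀ v ∈ X, ∀ a ∈ G.neighborSet v, ∀ b ∈ G.neighborSet v, a ≠ b → G.Adj a b := by
  
  constructor
  · intro hGP v hvX a ha b hb hab
    by_contra hnadj
    have hva : G.Adj v a := ha
    have hvb : G.Adj v b := hb
    set p : G.Walk a b := Walk.cons hva.symm (Walk.cons hvb Walk.nil) with hp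
    have hpath : p.IsPath := by
      rw [hp]
      simp [Walk.isPath_def, hva.ne', hvb.ne, hab]
    have hd2 : G.dist a b = 2 := by
      have hle : G.dist a b ≤ 2 := by simpa [hp] using dist_le p
      have hne0 : G.dist a b ≠ 0 := Nat.pos_iff_ne_zero.mp (hG.pos_dist_of_ne hab)
      have hne1 : G.dist a b ≠ 1 := fun h => hnadj (dist_eq_one_iff_adj.mp h)
      omega
    have := hGP a b p hpath (by simp [hp, hd2]) v (by simp [hp]) hvX
    rcases this with h | h
    · exact hva.ne h
    · exact hvb.ne h
  · intro hX u v p hp hlen w hw hwX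
    classical
    by_contra hc
    push_neg at hc
    obtain ⟨hwu, hwv⟩ := hc
    set q := p.takeUntil w hw with hq
    set r := p.dropUntil w hw with hr
    have hqr : q.append r = p := p.take_spec hw
    obtain ⟨b, hwb, r', hr'⟩ := r.exists_eq_cons_of_ne hwv
    obtain ⟨a, hwa, q', hq'⟩ := q.reverse.exists_eq_cons_of_ne hwu
    have hab : a ≠ b := by
      intro hh
      have hnodup : p.support.Nodup := hp.support_nodup
      rw [← hqr, Walk.support_append] at hnodup
      have ha : a ∈ q.support := by
        have : a ∈ q.reverse.support := by rw [hq']; simp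
        simpa using this
      have hb : b ∈ r.support.tail := by
        rw [hr']; simp
      exact (List.disjoint_of_nodup_append hnodup) ha (hh ▸ hb)
    have hadj : G.Adj a b := hX w hwX a hwa b hwb hab
    have hW : G.dist u v ≤ q'.reverse.length + (r'.length + 1) := by
      have := dist_le ((q'.reverse).append (Walk.cons hadj r'))
      simpa using this
    have hqlen : q.length = q'.length + 1 := by
      have := congrArg Walk.length hq'
      simpa using this
    have hrlen : r.length = r'.length + 1 := by
      have := congrArg Walk.length hr'
      simp [this]
    have hplen : p.length = q.length + r.length := by
      rw [← hqr, Walk.length_append]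
    simp only [Walk.length_reverse] at hW
    omega
end
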